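/- arXiv:1409.3649 — 5 statements merged into one kernel-verified Lean document; each statement's English description precedes it below -/
import Mathlib

section
/- Let (X, 𝓕, m) be a probability space, T an m-nonsingular transformation, and suppose the Perron–Frobenius operator 𝓛_T is asymptotically periodic with data s, r(k), g_{k,j}, λ_{k,j} (1 ≤ k ≤ s, 1 ≤ j ≤ r(k)); set g_k = (1/r(k)) Σ_{j=1}^{r(k)} g_{k,j}. Suppose further that ĝ_{i,j} ∈ L¹(m) (1 ≤ i ≤ ŝ, 1 ≤ j ≤ r̂(i)) are probability density functions with ĝ_{i,j}·ĝ_{k,l} = 0 m-a.e. for (i,j) ≠ (k,l), satisfying the support-cycling condition: m({ĝ_{i,j} > 0} \ T⁻¹{ĝ_{i,j+1} > 0}) = 0 for 1 ≤ j ≤ r̂(i)−1 and m({ĝ_{i,r̂(i)} > 0} \ T⁻¹{ĝ_{i,1} > 0}) = 0; set ĝ_i = (1/r̂(i)) Σ_{j=1}^{r̂(i)} ĝ_{i,j}. Then for every i ∈ {1,…,ŝ}: (a) m({ĝ_i > 0} ∩ ⋃_{k=1}^{s} {g_k > 0}) > 0; (b) for every k ∈ {1,…,s}, either m({g_k > 0}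 \ {ĝ_i > 0}) = 0 or m({ĝ_i > 0} ∩ {g_k > 0}) = 0; and consequently (c) ŝ ≤ s. -/
open MeasureTheory Filter Topology

noncomputable section

/-- `L` is the Perron–Frobenius operator of the `μ`-nonsingular transformation `T`:
for every integrable `f`, `L f` is integrable and `∫_A L f dμ = ∫_{T⁻¹ A} f dμ`
for every measurable set `A`. -/
def IsPF {α : Type*} [MeasurableSpace α] (μ : Measure α) (T : α → α)
    (L : (α → ℝ) → α → ℝ) : Prop :=
  ∀ f : α → ℝ, Integrable f μ →
    Integrable (L f) μ ∧
      ∀ A : Set α, MeasurableSet A → ∫ x in A, L f x ∂μ = ∫ x in T ⁻¹' A, f x ∂μ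

/-- Asymptotic periodicity of an operator `L` on `L¹(μ)` with data `s`, `r i`,
probability densities `g i j` and bounded linear functionals `Λ i j`. -/
def AsympPeriodic {α : Type*} [MeasurableSpace α] (μ : Measure α)
    (L : (α → ℝ) → α → ℝ) (s : ℕ) (r : ℕ → ℕ) (g : ℕ → ℕ → α → ℝ)
    (Λ : ℕ → ℕ → (α →₁[μ] ℝ) →L[ℝ] ℝ) : Prop :=
  1 ≤ s ∧ (∀ i ∈ Finset.Icc 1 s, 1 ≤ r i) ∧
    (∀ i ∈ Finset.Icc 1 s, ∀ j ∈ Finset.Icc 1 (r i),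
      Measurable (g i j) ∧ Integrable (g i j) μ ∧ 0 ≤ᵐ[μ] g i j ∧ ∫ x, g i j x ∂μ = 1) ∧
    (∀ i ∈ Finset.Icc 1 s, ∀ j ∈ Finset.Icc 1 (r i), ∀ k ∈ Finset.Icc 1 s,
      ∀ l ∈ Finset.Icc 1 (r k), (i, j) ≠ (k, l) →
        (fun x => g i j x * g k l x) =ᵐ[μ] 0) ∧
    (∀ i ∈ Finset.Icc 1 s,
      (∀ j ∈ Finset.Icc 1 (r i - 1), L (g i j) =ᵐ[μ] g i (j + 1)) ∧
        L (g i (r i)) =ᵐ[μ] g i 1) ∧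
    ∀ (f : α → ℝ) (hf : Integrable f μ),
      Tendsto (fun n => ∫ x, |(L^[n] (fun x => f x -
          ∑ i ∈ Finset.Icc 1 s, ∑ j ∈ Finset.Icc 1 (r i), Λ i j (hf.toL1 f) * g i j x)) x| ∂μ)
        atTop (𝓝 0)

/-- The averaged density `(1/r) ∑_{j=1}^{r} g j`. -/
def avgDens {α : Type*} (r : ℕ) (g : ℕ → α → ℝ) : α → ℝ :=
  fun x => (r : ℝ)⁻¹ * ∑ j ∈ Finset.Icc 1 r, g j x


section PF
variable {X : Type*} [MeasurableSpace X] {m : Measure X} [IsFiniteMeasure m]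
  {T : X → X} {L : (X → ℝ) → X → ℝ} {f h : X → ℝ}

lemma ae_eq_of_setIntegral (hf : Integrable f m) (hh : Integrable h m)
    (he : ∀ A : Set X, MeasurableSet A → ∫ x in A, f x ∂m = ∫ x in A, h x ∂m) :
    f =ᵐ[m] h :=
  Integrable.ae_eq_of_forall_setIntegral_eq f h hf hh (fun A hA _ => he A hA)

lemma pf_congr (hL : IsPF m T L) (hT : Measurable T) (hf : Integrable f m)
    (he : f =ᵐ[m] h) : L f =ᵐ[m] L h := by
  have hh : Integrable h m := hf.congr he
  refine ae_eq_of_setIntegral (hL f hf).1 (hL h hh).1 (fun A hA => ?_)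
  rw [(hL f hf).2 A hA, (hL h hh).2 A hA]
  exact integral_congr_ae (ae_restrict_of_ae he)

lemma pf_nonneg (hL : IsPF m T L) (hT : Measurable T) (hf : Integrable f m)
    (h0 : 0 ≤ᵐ[m] f) : 0 ≤ᵐ[m] L f := by
  refine ae_nonneg_of_forall_setIntegral_nonneg (hL f hf).1 (fun A hA _ => ?_)
  rw [(hL f hf).2 A hA]
  exact setIntegral_nonneg_of_ae h0

lemma pf_integral (hL : IsPF m T L) (hf : Integrable f m) :
    ∫ x, L f x ∂m = ∫ x, f x ∂m := by
  have := (hL f hf).2 Set.univ MeasurableSet.univ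
  simpa using this

lemma pf_sub (hL : IsPF m T L) (hT : Measurable T) (hf : Integrable f m)
    (hh : Integrable h m) :
    L (fun x => f x - h x) =ᵐ[m] fun x => L f x - L h x := by
  have hfh : Integrable (fun x => f x - h x) m := hf.sub hh
  refine ae_eq_of_setIntegral (hL _ hfh).1 (((hL f hf).1).sub (hL h hh).1) (fun A hA => ?_)
  rw [(hL _ hfh).2 A hA,
    integral_sub ((hL f hf).1.integrableOn) ((hL h hh).1.integrableOn),
    (hL f hf).2 A hA, (hL h hh).2 A hA,
    integral_sub (hf.integrableOn) (hh.integrableOn)]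

lemma pf_sum (hL : IsPF m T L) (hT : Measurable T) {ι : Type*} (t : Finset ι)
    (c : ι → ℝ) (F : ι → X → ℝ) (hF : ∀ b ∈ t, Integrable (F b) m) :
    L (fun x => ∑ b ∈ t, c b * F b x) =ᵐ[m] fun x => ∑ b ∈ t, c b * L (F b) x := by
  have hsum : Integrable (fun x => ∑ b ∈ t, c b * F b x) m :=
    integrable_finset_sum t (fun b hb => (hF b hb).const_mul _)
  have hsum' : Integrable (fun x => ∑ b ∈ t, c b * L (F b) x) m :=
    integrable_finset_sum t (fun b hb => ((hL _ (hF b hb)).1).const_mul _)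
  refine ae_eq_of_setIntegral (hL _ hsum).1 hsum' (fun A hA => ?_)
  rw [(hL _ hsum).2 A hA,
    integral_finset_sum t (fun b hb => ((hF b hb).const_mul _).integrableOn),
    integral_finset_sum t (fun b hb => (((hL _ (hF b hb)).1).const_mul _).integrableOn)]
  refine Finset.sum_congr rfl (fun b hb => ?_)
  rw [integral_const_mul, integral_const_mul, (hL _ (hF b hb)).2 A hA]

lemma pf_supp (hL : IsPF m T L) (hT : Measurable T) {A : Set X} (hA : MeasurableSet A)
    (hf : Integrable f m) (h0 : 0 ≤ᵐ[m] f)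
    (hsupp : ∀ᵐ x ∂m, T x ∉ A → f x = 0) :
    ∀ᵐ x ∂m, x ∉ A → L f x = 0 := by
  have hnn : 0 ≤ᵐ[m] L f := pf_nonneg hL hT hf h0
  have hz : ∫ x in Aᶜ, L f x ∂m = 0 := by
    rw [(hL f hf).2 Aᶜ hA.compl]
    have : f =ᵐ[m.restrict (T ⁻¹' Aᶜ)] 0 := by
      refine (ae_restrict_iff' (hA.compl.preimage hT)).2 ?_
      filter_upwards [hsupp] with x hx hxA
      exact hx hxA
    exact integral_congr_ae this |>.trans (by simp)
  have := (setIntegral_eq_zero_iff_of_nonneg_ae (ae_restrict_of_ae hnn)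
    (hL f hf).1.integrableOn).1 hz
  have := (ae_restrict_iff' hA.compl).1 this
  filter_upwards [this] with x hx hxA
  exact hx hxA


lemma pf_iter (hL : IsPF m T L) (hT : Measurable T) (hf : Integrable f m)
    (h0 : 0 ≤ᵐ[m] f) (n : ℕ) :
    Integrable (L^[n] f) m ∧ 0 ≤ᵐ[m] L^[n] f ∧ ∫ x, L^[n] f x ∂m = ∫ x, f x ∂m := by
  induction n with
  | zero => exact ⟨hf, h0, rfl⟩
  | succ n ih =>
    rw [Function.iterate_succ_apply']
    exact ⟨(hL _ ih.1).1, pf_nonneg hL hT ih.1 ih.2.1, (pf_integral hL ih.1).trans ih.2.2⟩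

lemma pf_iter_int (hL : IsPF m T L) (hf : Integrable f m) (n : ℕ) :
    Integrable (L^[n] f) m := by
  induction n with
  | zero => exact hf
  | succ n ih => rw [Function.iterate_succ_apply']; exact (hL _ ih).1

lemma pf_iter_supp (hL : IsPF m T L) (hT : Measurable T) {E : Set X}
    (hE : MeasurableSet E) (hinv : ∀ᵐ x ∂m, x ∈ E → T x ∈ E)
    (hf : Integrable f m) (h0 : 0 ≤ᵐ[m] f) (hsupp : ∀ᵐ x ∂m, x ∉ E → f x = 0) (n : ℕ) :
    ∀ᵐ x ∂m, x ∉ E → L^[n] f x = 0 := by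
  induction n with
  | zero => exact hsupp
  | succ n ih =>
    have h1 : ∀ᵐ x ∂m, T x ∉ E → L^[n] f x = 0 := by
      filter_upwards [ih, hinv] with x h1 h2 h3
      exact h1 (fun hx => h3 (h2 hx))
    have := pf_supp hL hT hE (pf_iter hL hT hf h0 n).1 (pf_iter hL hT hf h0 n).2.1 h1
    filter_upwards [this] with x hx hxE
    rw [Function.iterate_succ_apply']
    exact hx hxE

lemma pf_iter_sub (hL : IsPF m T L) (hT : Measurable T) (hf : Integrable f m)
    (hh : Integrable h m) (n : ℕ) :
    L^[n] (fun x => f x - h x) =ᵐ[m] fun x => L^[n] f x - L^[n] h x := by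
  induction n with
  | zero => exact Filter.EventuallyEq.rfl
  | succ n ih =>
    have hint : Integrable (L^[n] (fun x => f x - h x)) m :=
      pf_iter_int hL (hf.sub hh) n
    have step1 : L (L^[n] (fun x => f x - h x)) =ᵐ[m]
        L (fun x => L^[n] f x - L^[n] h x) := pf_congr hL hT hint ih
    have step2 : L (fun x => L^[n] f x - L^[n] h x) =ᵐ[m]
        fun x => L (L^[n] f) x - L (L^[n] h) x :=
      pf_sub hL hT (pf_iter_int hL hf n) (pf_iter_int hL hh n)
    have : L^[n+1] (fun x => f x - h x) = L (L^[n] (fun x => f x - h x)) :=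
      Function.iterate_succ_apply' L n _
    rw [this, Function.iterate_succ_apply' L n f, Function.iterate_succ_apply' L n h]
    exact step1.trans step2

end PF


def cyc (R : ℕ) (j : ℕ) : ℕ := if j = R then 1 else j + 1

lemma cyc_mem {R j : ℕ} (hR : 1 ≤ R) (hj : j ∈ Finset.Icc 1 R) : cyc R j ∈ Finset.Icc 1 R := by
  simp only [Finset.mem_Icc] at *
  unfold cyc
  split
  · omega
  · omega

lemma cyc_iter_mem {R j : ℕ} (hR : 1 ≤ R) (hj : j ∈ Finset.Icc 1 R) (n : ℕ) :
    (cyc R)^[n] j ∈ Finset.Icc 1 R := by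
  induction n with
  | zero => simpa using hj
  | succ n ih => rw [Function.iterate_succ_apply']; exact cyc_mem hR ih

lemma cyc_iter_add {R j a : ℕ} (hj : 1 ≤ j) (h : j + a ≤ R) : (cyc R)^[a] j = j + a := by
  induction a with
  | zero => simp
  | succ a ih =>
    rw [Function.iterate_succ_apply', ih (by omega)]
    unfold cyc
    split <;> omega

lemma cyc_iter_R {R j : ℕ} (hj : j ∈ Finset.Icc 1 R) : (cyc R)^[R] j = j := by
  simp only [Finset.mem_Icc] at hj
  have h1 : (cyc R)^[R - j] j = R := by rw [cyc_iter_add hj.1 (by omega)]; omega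
  have h2 : (cyc R)^[R - j + 1] j = 1 := by
    rw [Function.iterate_succ_apply', h1]; unfold cyc; simp
  have h3 : (cyc R)^[(j - 1) + (R - j + 1)] j = j := by
    rw [Function.iterate_add_apply, h2, cyc_iter_add le_rfl (by omega)]; omega
  have : (j - 1) + (R - j + 1) = R := by omega
  rwa [this] at h3

lemma cyc_iter_mul' {R j t : ℕ} (hj : j ∈ Finset.Icc 1 R) : (cyc R)^[t * R] j = j := by
  induction t with
  | zero => simp
  | succ t ih =>
    have h : (t + 1) * R = t * R + R := by ring
    rw [h, Function.iterate_add_apply, cyc_iter_R hj] at *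
    exact ih

lemma cyc_surj {R j j' : ℕ} (hj : j ∈ Finset.Icc 1 R) (hj' : j' ∈ Finset.Icc 1 R) :
    ∃ n, (cyc R)^[n] j = j' := by
  simp only [Finset.mem_Icc] at hj hj'
  by_cases h : j ≤ j'
  · exact ⟨j' - j, by rw [cyc_iter_add hj.1 (by omega)]; omega⟩
  · refine ⟨(j' - 1) + (1 + (R - j)), ?_⟩
    have h1 : (cyc R)^[R - j] j = R := by rw [cyc_iter_add hj.1 (by omega)]; omega
    have hcR : cyc R R = 1 := by unfold cyc; simp
    rw [Function.iterate_add_apply, Function.iterate_add_apply, h1,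
      Function.iterate_one, hcR, cyc_iter_add le_rfl (by omega)]
    omega

lemma cyc_inj {R j₀ j₁ n : ℕ} (h₀ : j₀ ∈ Finset.Icc 1 R) (h₁ : j₁ ∈ Finset.Icc 1 R)
    (h : (cyc R)^[n] j₀ = (cyc R)^[n] j₁) : j₀ = j₁ := by
  have hR : 1 ≤ R := by simp only [Finset.mem_Icc] at h₀; omega
  have key : ∀ j ∈ Finset.Icc 1 R, (cyc R)^[n * R - n] ((cyc R)^[n] j) = j := by
    intro j hj
    rw [← Function.iterate_add_apply]
    have hle : n ≤ n * R := Nat.le_mul_of_pos_right n (by omega)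
    have : n * R - n + n = n * R := by omega
    rw [this, cyc_iter_mul' hj]
  rw [← key j₀ h₀, h, key j₁ h₁]

section Key
variable {X : Type*} [MeasurableSpace X] {m : Measure X} [IsFiniteMeasure m]
  {T : X → X} {L : (X → ℝ) → X → ℝ}

lemma key (hL : IsPF m T L) (hT : Measurable T)
    {s : ℕ} {r : ℕ → ℕ} {g : ℕ → ℕ → X → ℝ}
    (hr : ∀ k ∈ Finset.Icc 1 s, 1 ≤ r k)
    (hgint : ∀ k ∈ Finset.Icc 1 s, ∀ j ∈ Finset.Icc 1 (r k), Integrable (g k j) m)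
    (hcycle : ∀ k ∈ Finset.Icc 1 s, ∀ j ∈ Finset.Icc 1 (r k),
      L (g k j) =ᵐ[m] g k (cyc (r k) j))
    {f : X → ℝ} (hf : Integrable f m) (h0 : 0 ≤ᵐ[m] f)
    {c : ℕ → ℕ → ℝ}
    (hconv : Tendsto (fun n => ∫ x, |(L^[n] (fun y => f y -
        ∑ k ∈ Finset.Icc 1 s, ∑ j ∈ Finset.Icc 1 (r k), c k j * g k j y)) x| ∂m)
      atTop (𝓝 0)) :
    (∀ n, 0 ≤ᵐ[m] fun x => ∑ k ∈ Finset.Icc 1 s, ∑ j ∈ Finset.Icc 1 (r k),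
        c k j * g k ((cyc (r k))^[n] j) x) ∧
    (∫ x, (∑ k ∈ Finset.Icc 1 s, ∑ j ∈ Finset.Icc 1 (r k), c k j * g k j x) ∂m
        = ∫ x, f x ∂m) ∧
    (∀ B : Set X, MeasurableSet B → (∀ᵐ x ∂m, x ∈ B → T x ∈ B) →
      (∀ᵐ x ∂m, x ∉ B → f x = 0) → ∀ n, ∀ᵐ x ∂m, x ∉ B →
        (∑ k ∈ Finset.Icc 1 s, ∑ j ∈ Finset.Icc 1 (r k),
          c k j * g k ((cyc (r k))^[n] j) x) = 0) := by
  classical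
  set H : ℕ → X → ℝ := fun n x => ∑ k ∈ Finset.Icc 1 s, ∑ j ∈ Finset.Icc 1 (r k),
      c k j * g k ((cyc (r k))^[n] j) x with hHdef
  have hHint : ∀ n, Integrable (H n) m := by
    intro n
    refine integrable_finset_sum _ (fun k hk => integrable_finset_sum _ (fun j hj => ?_))
    exact (hgint k hk _ (cyc_iter_mem (hr k hk) hj n)).const_mul _
  -- L^[n] (H 0) =ᵐ H n
  have hLH : ∀ n, L^[n] (H 0) =ᵐ[m] H n := by
    intro n
    induction n with
    | zero => exact Filter.EventuallyEq.rfl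
    | succ n ih =>
      have hint : Integrable (L^[n] (H 0)) m := pf_iter_int hL (hHint 0) n
      have step1 : L (L^[n] (H 0)) =ᵐ[m] L (H n) := pf_congr hL hT hint ih
      -- rewrite H n as a sigma sum
      have hsig : ∀ nn, H nn = fun x => ∑ p ∈ (Finset.Icc 1 s).sigma
          (fun k => Finset.Icc 1 (r k)), c p.1 p.2 * g p.1 ((cyc (r p.1))^[nn] p.2) x := by
        intro nn
        funext x
        rw [Finset.sum_sigma]
      have step2 : L (H n) =ᵐ[m] fun x => ∑ p ∈ (Finset.Icc 1 s).sigma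
          (fun k => Finset.Icc 1 (r k)),
            c p.1 p.2 * L (g p.1 ((cyc (r p.1))^[n] p.2)) x := by
        rw [hsig n]
        exact pf_sum hL hT _ _ _ (fun p hp => by
          rw [Finset.mem_sigma] at hp
          exact hgint p.1 hp.1 _ (cyc_iter_mem (hr p.1 hp.1) hp.2 n))
      have step3 : (fun x => ∑ p ∈ (Finset.Icc 1 s).sigma
          (fun k => Finset.Icc 1 (r k)),
            c p.1 p.2 * L (g p.1 ((cyc (r p.1))^[n] p.2)) x) =ᵐ[m] H (n+1) := by
        have hae : ∀ᵐ x ∂m, ∀ (k j : ℕ), k ∈ Finset.Icc 1 s → j ∈ Finset.Icc 1 (r k) →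
            L (g k ((cyc (r k))^[n] j)) x = g k ((cyc (r k))^[n+1] j) x := by
          rw [ae_all_iff]
          intro k
          rw [ae_all_iff]
          intro j
          by_cases hk : k ∈ Finset.Icc 1 s
          · by_cases hj : j ∈ Finset.Icc 1 (r k)
            · filter_upwards [hcycle k hk _ (cyc_iter_mem (hr k hk) hj n)] with x hx _ _
              rw [Function.iterate_succ_apply']
              exact hx
            · exact Filter.Eventually.of_forall (fun x _ hj' => absurd hj' hj)
          · exact Filter.Eventually.of_forall (fun x hk' => absurd hk' hk)
        filter_upwards [hae] with x hx
        rw [hsig (n+1)]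
        refine Finset.sum_congr rfl (fun p hp => ?_)
        rw [Finset.mem_sigma] at hp
        rw [hx p.1 p.2 hp.1 hp.2]
      have : L^[n+1] (H 0) = L (L^[n] (H 0)) := Function.iterate_succ_apply' L n _
      rw [this]
      exact (step1.trans step2).trans step3
  -- period
  set P : ℕ := ∏ k ∈ Finset.Icc 1 s, r k with hPdef
  have hP1 : 1 ≤ P := Finset.one_le_prod' hr
  have hper : ∀ n, H (n + P) = H n := by
    intro n
    funext x
    refine Finset.sum_congr rfl (fun k hk => Finset.sum_congr rfl (fun j hj => ?_))
    have hdvd : r k ∣ P := Finset.dvd_prod_of_mem r hk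
    have : (cyc (r k))^[P] j = j := by
      obtain ⟨t, ht⟩ := hdvd
      rw [ht, mul_comm, cyc_iter_mul' hj]
    rw [Function.iterate_add_apply, this]
  have hperiter : ∀ n₀ t, H (n₀ + t * P) = H n₀ := by
    intro n₀ t
    induction t with
    | zero => simp
    | succ t ih =>
      have : n₀ + (t + 1) * P = (n₀ + t * P) + P := by ring
      rw [this, hper, ih]
  -- convergence restated
  have hconv' : Tendsto (fun n => ∫ x, |L^[n] f x - H n x| ∂m) atTop (𝓝 0) := by
    refine hconv.congr (fun n => ?_)
    refine integral_congr_ae ?_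
    have h1 : L^[n] (fun y => f y - H 0 y) =ᵐ[m] fun x => L^[n] f x - L^[n] (H 0) x :=
      pf_iter_sub hL hT hf (hHint 0) n
    filter_upwards [h1, hLH n] with x hx1 hx2
    rw [show (fun y => f y - ∑ k ∈ Finset.Icc 1 s, ∑ j ∈ Finset.Icc 1 (r k),
        c k j * g k j y) = fun y => f y - H 0 y from rfl, hx1, hx2]
  -- extraction along subsequence for fixed n₀
  have hsub : ∀ n₀ : ℕ, Tendsto (fun t => ∫ x, |L^[n₀ + t * P] f x - H n₀ x| ∂m)
      atTop (𝓝 0) := by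
    intro n₀
    have htt : Tendsto (fun t => n₀ + t * P) atTop atTop := by
      refine tendsto_atTop_mono (fun t => ?_) tendsto_id
      calc (t : ℕ) = t * 1 := by ring
      _ ≤ t * P := Nat.mul_le_mul_left t hP1
      _ ≤ n₀ + t * P := Nat.le_add_left _ _
    have := hconv'.comp htt
    refine this.congr (fun t => ?_)
    simp only [Function.comp_apply]
    rw [hperiter n₀ t]
  have hvt : ∀ n, Integrable (L^[n] f) m ∧ 0 ≤ᵐ[m] L^[n] f ∧
      ∫ x, L^[n] f x ∂m = ∫ x, f x ∂m := pf_iter hL hT hf h0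
  -- (1) nonnegativity of H n₀
  have hnn : ∀ n₀, 0 ≤ᵐ[m] H n₀ := by
    intro n₀
    set np : X → ℝ := fun x => max (-(H n₀ x)) 0 with hnp
    have hnpint : Integrable np m := by
      have := ((hHint n₀).neg).sup (integrable_const (0:ℝ))
      exact this
    have hbound : ∀ t, ∫ x, np x ∂m ≤ ∫ x, |L^[n₀ + t * P] f x - H n₀ x| ∂m := by
      intro t
      refine integral_mono_ae hnpint (((hvt _).1.sub (hHint n₀)).abs) ?_
      filter_upwards [(hvt (n₀ + t * P)).2.1] with x hx
      simp only [hnp]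
      simp only [Pi.zero_apply] at hx
      rcases le_or_gt (H n₀ x) 0 with h | h
      · have h1 : -(H n₀ x) ≤ |L^[n₀ + t * P] f x - H n₀ x| := by
          have : -(H n₀ x) ≤ L^[n₀ + t * P] f x - H n₀ x := by linarith
          exact this.trans (le_abs_self _)
        exact max_le h1 (abs_nonneg _)
      · exact max_le (by linarith [abs_nonneg (L^[n₀ + t * P] f x - H n₀ x)]) (abs_nonneg _)
    have hle : ∫ x, np x ∂m ≤ 0 := ge_of_tendsto' (hsub n₀) hbound
    have hge : 0 ≤ ∫ x, np x ∂m := integral_nonneg (fun x => le_max_right _ _)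
    have hz : ∫ x, np x ∂m = 0 := le_antisymm hle hge
    have := (integral_eq_zero_iff_of_nonneg_ae
      (Filter.Eventually.of_forall (fun x => le_max_right _ _)) hnpint).1 hz
    filter_upwards [this] with x hx
    simp only [hnp, Pi.zero_apply] at hx ⊢
    have : -(H n₀ x) ≤ 0 := by
      by_contra hcon
      push_neg at hcon
      rw [max_eq_left hcon.le] at hx
      linarith
    linarith
  refine ⟨hnn, ?_, ?_⟩
  -- (2) integral of H 0
  · have hbound : ∀ t, |∫ x, f x ∂m - ∫ x, H 0 x ∂m| ≤
        ∫ x, |L^[0 + t * P] f x - H 0 x| ∂m := by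
      intro t
      rw [← (hvt (0 + t * P)).2.2, ← integral_sub (hvt _).1 (hHint 0)]
      simpa [Real.norm_eq_abs] using
        norm_integral_le_integral_norm (fun x => L^[0 + t * P] f x - H 0 x) (μ := m)
    have hle : |∫ x, f x ∂m - ∫ x, H 0 x ∂m| ≤ 0 := ge_of_tendsto' (hsub 0) hbound
    have := abs_nonpos_iff.1 hle
    have h00 : H 0 = fun x => ∑ k ∈ Finset.Icc 1 s, ∑ j ∈ Finset.Icc 1 (r k),
        c k j * g k j x := rfl
    rw [← h00]
    linarith [this, sub_eq_zero.1 this]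
  -- (3) support
  · intro B hB hinvB hsuppB n₀
    have hvsupp : ∀ t, ∀ᵐ x ∂m, x ∉ B → L^[n₀ + t * P] f x = 0 :=
      fun t => pf_iter_supp hL hT hB hinvB hf h0 hsuppB _
    have habs : Integrable (fun x => |H n₀ x|) m := (hHint n₀).abs
    have hbound : ∀ t, ∫ x in Bᶜ, |H n₀ x| ∂m ≤
        ∫ x, |L^[n₀ + t * P] f x - H n₀ x| ∂m := by
      intro t
      have heq : ∫ x in Bᶜ, |H n₀ x| ∂m = ∫ x in Bᶜ, |L^[n₀ + t * P] f x - H n₀ x| ∂m := by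
        refine integral_congr_ae ?_
        refine (ae_restrict_iff' hB.compl).2 ?_
        filter_upwards [hvsupp t] with x hx hxB
        rw [hx hxB]
        rw [zero_sub, abs_neg]
      rw [heq]
      exact setIntegral_le_integral (((hvt _).1.sub (hHint n₀)).abs)
        (Filter.Eventually.of_forall (fun x => abs_nonneg _))
    have hle : ∫ x in Bᶜ, |H n₀ x| ∂m ≤ 0 := ge_of_tendsto' (hsub n₀) hbound
    have hge : 0 ≤ ∫ x in Bᶜ, |H n₀ x| ∂m :=
      setIntegral_nonneg_of_ae (Filter.Eventually.of_forall (fun x => abs_nonneg _))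
    have hz := (setIntegral_eq_zero_iff_of_nonneg_ae
      (Filter.Eventually.of_forall (fun x => abs_nonneg _)) habs.integrableOn).1
      (le_antisymm hle hge)
    have := (ae_restrict_iff' hB.compl).1 hz
    filter_upwards [this] with x hx hxB
    have := hx hxB
    simpa [abs_eq_zero] using this

end Key


section Helpers
variable {X : Type*} [MeasurableSpace X] {m : Measure X} [IsFiniteMeasure m]
  {T : X → X} {L : (X → ℝ) → X → ℝ}

lemma ae_ball_mem₁ {R : ℕ} {p : ℕ → X → Prop}
    (h : ∀ j ∈ Finset.Icc 1 R, ∀ᵐ x ∂m, p j x) :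
    ∀ᵐ x ∂m, ∀ j ∈ Finset.Icc 1 R, p j x := by
  rw [ae_all_iff]
  intro j
  by_cases hj : j ∈ Finset.Icc 1 R
  · filter_upwards [h j hj] with x hx _
    exact hx
  · exact Filter.Eventually.of_forall (fun x hj' => absurd hj' hj)

lemma ae_ball_mem₂ {s : ℕ} {r : ℕ → ℕ} {p : ℕ → ℕ → X → Prop}
    (h : ∀ k ∈ Finset.Icc 1 s, ∀ j ∈ Finset.Icc 1 (r k), ∀ᵐ x ∂m, p k j x) :
    ∀ᵐ x ∂m, ∀ k ∈ Finset.Icc 1 s, ∀ j ∈ Finset.Icc 1 (r k), p k j x :=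
  ae_ball_mem₁ (fun k hk => ae_ball_mem₁ (h k hk))

lemma avg_pos_iff {R : ℕ} (hR : 1 ≤ R) {v : ℕ → X → ℝ} {x : X}
    (hnn : ∀ j ∈ Finset.Icc 1 R, 0 ≤ v j x) :
    0 < avgDens R v x ↔ ∃ j ∈ Finset.Icc 1 R, 0 < v j x := by
  have hRpos : (0:ℝ) < (R:ℝ)⁻¹ := by positivity
  constructor
  · intro h
    by_contra hcon
    push_neg at hcon
    have : ∑ j ∈ Finset.Icc 1 R, v j x = 0 :=
      Finset.sum_eq_zero (fun j hj => le_antisymm (hcon j hj) (hnn j hj))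
    rw [avgDens, this, mul_zero] at h
    exact lt_irrefl 0 h
  · rintro ⟨j, hj, hjpos⟩
    have : v j x ≤ ∑ j ∈ Finset.Icc 1 R, v j x := Finset.single_le_sum hnn hj
    have hsum : 0 < ∑ j ∈ Finset.Icc 1 R, v j x := lt_of_lt_of_le hjpos this
    exact mul_pos hRpos hsum

lemma pos_meas_of_integral_ne_zero {g : X → ℝ} (hint : Integrable g m)
    (h1 : ∫ x, g x ∂m ≠ 0) (hnn : 0 ≤ᵐ[m] g) : 0 < m {x | 0 < g x} := by
  rw [pos_iff_ne_zero]
  intro hz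
  have hae : ∀ᵐ x ∂m, x ∉ {x | 0 < g x} := measure_eq_zero_iff_ae_notMem.1 hz
  apply h1
  have heq : g =ᵐ[m] 0 := by
    filter_upwards [hae, hnn] with x h1x h2x
    simp only [Set.mem_setOf_eq, not_lt] at h1x
    exact le_antisymm h1x h2x
  simp [integral_congr_ae heq]

lemma avg_integral_one {R : ℕ} (hR : 1 ≤ R) {v : ℕ → X → ℝ}
    (hint : ∀ j ∈ Finset.Icc 1 R, Integrable (v j) m)
    (h1 : ∀ j ∈ Finset.Icc 1 R, ∫ x, v j x ∂m = 1) :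
    ∫ x, avgDens R v x ∂m = 1 := by
  unfold avgDens
  rw [integral_const_mul, integral_finset_sum _ hint, Finset.sum_congr rfl h1]
  simp only [Finset.sum_const, Nat.card_Icc, smul_eq_mul, mul_one]
  rw [Nat.add_sub_cancel]
  field_simp
  simp

lemma avg_fwd_inv {R : ℕ} (hR : 1 ≤ R) {v : ℕ → X → ℝ}
    (hnn_x : ∀ᵐ x ∂m, ∀ j ∈ Finset.Icc 1 R, 0 ≤ v j x)
    (hnn_Tx : ∀ᵐ x ∂m, ∀ j ∈ Finset.Icc 1 R, 0 ≤ v j (T x))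
    (hstep : ∀ j ∈ Finset.Icc 1 R, ∀ᵐ x ∂m, 0 < v j x → 0 < v (cyc R j) (T x)) :
    ∀ᵐ x ∂m, 0 < avgDens R v x → 0 < avgDens R v (T x) := by
  filter_upwards [hnn_x, hnn_Tx, ae_ball_mem₁ hstep] with x h1 h2 h3 hpos
  obtain ⟨j, hj, hjpos⟩ := (avg_pos_iff hR h1).1 hpos
  exact (avg_pos_iff hR h2).2 ⟨cyc R j, cyc_mem hR hj, h3 j hj hjpos⟩

lemma ae_comp_nonneg (hT : Measurable T)
    (hns : ∀ A : Set X, MeasurableSet A → m A = 0 → m (T ⁻¹' A) = 0)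
    {R : ℕ} {v : ℕ → X → ℝ}
    (hmeas : ∀ j ∈ Finset.Icc 1 R, Measurable (v j))
    (hnn : ∀ j ∈ Finset.Icc 1 R, 0 ≤ᵐ[m] v j) :
    ∀ᵐ x ∂m, ∀ j ∈ Finset.Icc 1 R, 0 ≤ v j (T x) := by
  set N : Set X := ⋃ j ∈ Finset.Icc 1 R, {x | v j x < 0} with hN
  have hNmeas : MeasurableSet N :=
    (Finset.Icc 1 R).measurableSet_biUnion (fun j hj =>
      measurableSet_lt (hmeas j hj) measurable_const)
  have hNnull : m N = 0 := by
    rw [hN]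
    rw [show (⋃ j ∈ Finset.Icc 1 R, {x | v j x < 0}) =
      ⋃ j ∈ (Finset.Icc 1 R : Set ℕ), {x | v j x < 0} by simp]
    rw [measure_biUnion_null_iff (Finset.Icc 1 R).countable_toSet]
    intro j hj
    have := hnn (j := j) (by simpa using hj)
    rw [EventuallyLE, ae_iff] at this
    simpa [not_le] using this
  have hpre := hns N hNmeas hNnull
  have hae : ∀ᵐ x ∂m, T x ∉ N := by
    have := measure_eq_zero_iff_ae_notMem.1 hpre
    filter_upwards [this] with x hx
    exact hx
  filter_upwards [hae] with x hx j hj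
  by_contra hcon
  push_neg at hcon
  exact hx (Set.mem_biUnion hj hcon)

lemma coeff_extract {s : ℕ} {r : ℕ → ℕ} {g : ℕ → ℕ → X → ℝ} {c : ℕ → ℕ → ℝ}
    (hr : ∀ k ∈ Finset.Icc 1 s, 1 ≤ r k)
    (horthp : ∀ᵐ x ∂m, ∀ k ∈ Finset.Icc 1 s, ∀ j ∈ Finset.Icc 1 (r k),
      ∀ k' ∈ Finset.Icc 1 s, ∀ l ∈ Finset.Icc 1 (r k'), ((k,j) ≠ (k',l)) →
        g k j x * g k' l x = 0)
    (n : ℕ) {k j : ℕ} (hk : k ∈ Finset.Icc 1 s) (hj : j ∈ Finset.Icc 1 (r k)) :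
    ∀ᵐ x ∂m, 0 < g k ((cyc (r k))^[n] j) x →
      (∑ k' ∈ Finset.Icc 1 s, ∑ j' ∈ Finset.Icc 1 (r k'),
        c k' j' * g k' ((cyc (r k'))^[n] j') x) = c k j * g k ((cyc (r k))^[n] j) x := by
  filter_upwards [horthp] with x hx hpos
  rw [Finset.sum_eq_single_of_mem k hk, Finset.sum_eq_single_of_mem j hj]
  · intro j₀ hj₀ hne
    have hprod := hx k hk _ (cyc_iter_mem (hr k hk) hj₀ n) k hk _
      (cyc_iter_mem (hr k hk) hj n) (by
        simp only [Ne, Prod.mk.injEq, not_and]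
        intro _
        exact fun h => hne (cyc_inj hj₀ hj h))
    rcases mul_eq_zero.1 hprod with h | h
    · rw [h, mul_zero]
    · exact absurd h hpos.ne'
  · intro k₀ hk₀ hne
    refine Finset.sum_eq_zero (fun j₀ hj₀ => ?_)
    have hprod := hx k₀ hk₀ _ (cyc_iter_mem (hr k₀ hk₀) hj₀ n) k hk _
      (cyc_iter_mem (hr k hk) hj n) (by
        simp only [Ne, Prod.mk.injEq, not_and]
        intro h
        exact absurd h hne)
    rcases mul_eq_zero.1 hprod with h | h
    · rw [h, mul_zero]
    · exact absurd h hpos.ne'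

end Helpers

section StepHelper
variable {X : Type*} [MeasurableSpace X] {m : Measure X} [IsFiniteMeasure m]
  {T : X → X} {L : (X → ℝ) → X → ℝ}

lemma pf_supp_step (hL : IsPF m T L) (hT : Measurable T) {u w : X → ℝ}
    (hu : Integrable u m) (hunn : 0 ≤ᵐ[m] u) (hwmeas : Measurable w)
    (hwnn : 0 ≤ᵐ[m] w) (hLu : L u =ᵐ[m] w) :
    ∀ᵐ x ∂m, 0 < u x → 0 < w (T x) := by
  set S : Set X := {x | 0 < w x} with hS
  have hSmeas : MeasurableSet S := measurableSet_lt measurable_const hwmeas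
  have hz : ∫ x in T ⁻¹' Sᶜ, u x ∂m = 0 := by
    rw [← (hL u hu).2 Sᶜ hSmeas.compl]
    have h1 : L u =ᵐ[m.restrict Sᶜ] w := ae_restrict_of_ae hLu
    rw [integral_congr_ae h1]
    have h2 : w =ᵐ[m.restrict Sᶜ] 0 := by
      refine (ae_restrict_iff' hSmeas.compl).2 ?_
      filter_upwards [hwnn] with x hx hxS
      simp only [hS, Set.mem_compl_iff, Set.mem_setOf_eq, not_lt] at hxS
      exact le_antisymm hxS hx
    rw [integral_congr_ae h2]
    simp
  have := (setIntegral_eq_zero_iff_of_nonneg_ae (ae_restrict_of_ae hunn)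
    hu.integrableOn).1 hz
  have h3 := (ae_restrict_iff' (hSmeas.compl.preimage hT)).1 this
  filter_upwards [h3] with x hx hpos
  by_contra hcon
  have hxmem : x ∈ T ⁻¹' Sᶜ := by
    simp only [Set.mem_preimage, Set.mem_compl_iff, hS, Set.mem_setOf_eq]
    exact hcon
  have := hx hxmem
  simp only [Pi.zero_apply] at this
  exact absurd this hpos.ne'

end StepHelper


/-- **Theorem 3.1(1).** Let `𝓛_T` be asymptotically periodic with data
`s, r, g, Λ` and let `ĝ_{i,j}` (`1 ≤ i ≤ s', 1 ≤ j ≤ r' i`) be mutually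
orthogonal probability densities whose supports are cycled by `T`.  With
`ĝ_i = (1/r' i) ∑_j ĝ_{i,j}` and `g_k = (1/r k) ∑_j g_{k,j}`:
(a) `m({ĝ_i > 0} ∩ ⋃_k {g_k > 0}) > 0`;
(b) for every `k`, either `m({g_k > 0} \ {ĝ_i > 0}) = 0` or
`m({ĝ_i > 0} ∩ {g_k > 0}) = 0`; and (c) `s' ≤ s`. -/
theorem stmt_0 {X : Type*} [MeasurableSpace X] (m : Measure X) [IsProbabilityMeasure m]
    (T : X → X) (hT : Measurable T)
    (hns : ∀ A : Set X, MeasurableSet A → m A = 0 → m (T ⁻¹' A) = 0)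
    (L : (X → ℝ) → X → ℝ) (hL : IsPF m T L)
    (s : ℕ) (r : ℕ → ℕ) (g : ℕ → ℕ → X → ℝ) (Λ : ℕ → ℕ → (X →₁[m] ℝ) →L[ℝ] ℝ)
    (hap : AsympPeriodic m L s r g Λ)
    (s' : ℕ) (r' : ℕ → ℕ) (g' : ℕ → ℕ → X → ℝ)
    (hs' : 1 ≤ s') (hr' : ∀ i ∈ Finset.Icc 1 s', 1 ≤ r' i)
    (hdens : ∀ i ∈ Finset.Icc 1 s', ∀ j ∈ Finset.Icc 1 (r' i),
      Measurable (g' i j) ∧ Integrable (g' i j) m ∧ 0 ≤ᵐ[m] g' i j ∧ ∫ x, g' i j x ∂m = 1)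
    (horth : ∀ i ∈ Finset.Icc 1 s', ∀ j ∈ Finset.Icc 1 (r' i), ∀ k ∈ Finset.Icc 1 s',
      ∀ l ∈ Finset.Icc 1 (r' k), (i, j) ≠ (k, l) →
        (fun x => g' i j x * g' k l x) =ᵐ[m] 0)
    (hcyc : ∀ i ∈ Finset.Icc 1 s',
      (∀ j ∈ Finset.Icc 1 (r' i - 1),
        m ({x | 0 < g' i j x} \ T ⁻¹' {x | 0 < g' i (j + 1) x}) = 0) ∧
        m ({x | 0 < g' i (r' i) x} \ T ⁻¹' {x | 0 < g' i 1 x}) = 0) :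
    (∀ i ∈ Finset.Icc 1 s',
      0 < m ({x | 0 < avgDens (r' i) (g' i) x} ∩
          ⋃ k ∈ Finset.Icc 1 s, {x | 0 < avgDens (r k) (g k) x}) ∧
        ∀ k ∈ Finset.Icc 1 s,
          m ({x | 0 < avgDens (r k) (g k) x} \ {x | 0 < avgDens (r' i) (g' i) x}) = 0 ∨
            m ({x | 0 < avgDens (r' i) (g' i) x} ∩ {x | 0 < avgDens (r k) (g k) x}) = 0) ∧
      s' ≤ s := by
  classical
  obtain ⟨hs1, hr, hg, horthg, hcycg, hconvall⟩ := hap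
  have hgmeas : ∀ k ∈ Finset.Icc 1 s, ∀ j ∈ Finset.Icc 1 (r k), Measurable (g k j) :=
    fun k hk j hj => (hg k hk j hj).1
  have hgint : ∀ k ∈ Finset.Icc 1 s, ∀ j ∈ Finset.Icc 1 (r k), Integrable (g k j) m :=
    fun k hk j hj => (hg k hk j hj).2.1
  have hgnn : ∀ k ∈ Finset.Icc 1 s, ∀ j ∈ Finset.Icc 1 (r k), 0 ≤ᵐ[m] g k j :=
    fun k hk j hj => (hg k hk j hj).2.2.1
  have hg1 : ∀ k ∈ Finset.Icc 1 s, ∀ j ∈ Finset.Icc 1 (r k), ∫ x, g k j x ∂m = 1 :=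
    fun k hk j hj => (hg k hk j hj).2.2.2
  have hg'meas : ∀ i ∈ Finset.Icc 1 s', ∀ j ∈ Finset.Icc 1 (r' i), Measurable (g' i j) :=
    fun i hi j hj => (hdens i hi j hj).1
  have hg'int : ∀ i ∈ Finset.Icc 1 s', ∀ j ∈ Finset.Icc 1 (r' i), Integrable (g' i j) m :=
    fun i hi j hj => (hdens i hi j hj).2.1
  have hg'nn : ∀ i ∈ Finset.Icc 1 s', ∀ j ∈ Finset.Icc 1 (r' i), 0 ≤ᵐ[m] g' i j :=
    fun i hi j hj => (hdens i hi j hj).2.2.1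
  have hg'1 : ∀ i ∈ Finset.Icc 1 s', ∀ j ∈ Finset.Icc 1 (r' i), ∫ x, g' i j x ∂m = 1 :=
    fun i hi j hj => (hdens i hi j hj).2.2.2
  -- the step relation for g in cyc form
  have hstep : ∀ k ∈ Finset.Icc 1 s, ∀ j ∈ Finset.Icc 1 (r k),
      L (g k j) =ᵐ[m] g k (cyc (r k) j) := by
    intro k hk j hj
    simp only [Finset.mem_Icc] at hj
    by_cases hjr : j = r k
    · have := (hcycg k hk).2
      rw [show cyc (r k) j = 1 by unfold cyc; simp [hjr], hjr]
      exact this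
    · have hjm : j ∈ Finset.Icc 1 (r k - 1) := by
        simp only [Finset.mem_Icc]; omega
      have := (hcycg k hk).1 j hjm
      rw [show cyc (r k) j = j + 1 by unfold cyc; simp [hjr]]
      exact this
  -- a.e. packages
  have hgnnP : ∀ᵐ x ∂m, ∀ k ∈ Finset.Icc 1 s, ∀ j ∈ Finset.Icc 1 (r k), 0 ≤ g k j x :=
    ae_ball_mem₂ (fun k hk j hj => (hgnn k hk j hj).mono (fun x hx => by simpa using hx))
  have hg'nnP : ∀ᵐ x ∂m, ∀ i ∈ Finset.Icc 1 s', ∀ j ∈ Finset.Icc 1 (r' i), 0 ≤ g' i j x :=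
    ae_ball_mem₂ (fun i hi j hj => (hg'nn i hi j hj).mono (fun x hx => by simpa using hx))
  have horthP : ∀ᵐ x ∂m, ∀ k ∈ Finset.Icc 1 s, ∀ j ∈ Finset.Icc 1 (r k),
      ∀ k' ∈ Finset.Icc 1 s, ∀ l ∈ Finset.Icc 1 (r k'), ((k,j) ≠ (k',l)) →
        g k j x * g k' l x = 0 := by
    refine ae_ball_mem₂ (fun k hk j hj => ae_ball_mem₂ (fun k' hk' l hl => ?_))
    by_cases hne : ((k,j) : ℕ × ℕ) = (k',l)
    · exact Filter.Eventually.of_forall (fun x h => absurd hne h)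
    · filter_upwards [horthg k hk j hj k' hk' l hl hne] with x hx _
      simpa using hx
  have horth'P : ∀ᵐ x ∂m, ∀ i ∈ Finset.Icc 1 s', ∀ j ∈ Finset.Icc 1 (r' i),
      ∀ i' ∈ Finset.Icc 1 s', ∀ l ∈ Finset.Icc 1 (r' i'), ((i,j) ≠ (i',l)) →
        g' i j x * g' i' l x = 0 := by
    refine ae_ball_mem₂ (fun i hi j hj => ae_ball_mem₂ (fun i' hi' l hl => ?_))
    by_cases hne : ((i,j) : ℕ × ℕ) = (i',l)
    · exact Filter.Eventually.of_forall (fun x h => absurd hne h)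
    · filter_upwards [horth i hi j hj i' hi' l hl hne] with x hx _
      simpa using hx
  -- sets
  set E : ℕ → Set X := fun i => {x | 0 < avgDens (r' i) (g' i) x} with hE
  set F : ℕ → Set X := fun k => {x | 0 < avgDens (r k) (g k) x} with hF
  have havg'meas : ∀ i ∈ Finset.Icc 1 s', Measurable (avgDens (r' i) (g' i)) :=
    fun i hi => (Finset.measurable_sum _ (fun j hj => hg'meas i hi j hj)).const_mul _
  have havgmeas : ∀ k ∈ Finset.Icc 1 s, Measurable (avgDens (r k) (g k)) :=
    fun k hk => (Finset.measurable_sum _ (fun j hj => hgmeas k hk j hj)).const_mul _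
  have hEmeas : ∀ i ∈ Finset.Icc 1 s', MeasurableSet (E i) :=
    fun i hi => measurableSet_lt measurable_const (havg'meas i hi)
  have hFmeas : ∀ k ∈ Finset.Icc 1 s, MeasurableSet (F k) :=
    fun k hk => measurableSet_lt measurable_const (havgmeas k hk)
  -- forward invariance of F k
  have hstep_set : ∀ k ∈ Finset.Icc 1 s, ∀ j ∈ Finset.Icc 1 (r k),
      ∀ᵐ x ∂m, 0 < g k j x → 0 < g k (cyc (r k) j) (T x) := by
    intro k hk j hj
    exact pf_supp_step hL hT (hgint k hk j hj) (hgnn k hk j hj)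
      (hgmeas k hk _ (cyc_mem (hr k hk) hj)) (hgnn k hk _ (cyc_mem (hr k hk) hj))
      (hstep k hk j hj)
  have hFinv : ∀ k ∈ Finset.Icc 1 s, ∀ᵐ x ∂m, x ∈ F k → T x ∈ F k := by
    intro k hk
    have := avg_fwd_inv (m := m) (T := T) (hr k hk)
      (ae_ball_mem₁ (fun j hj => (hgnn k hk j hj).mono (fun x hx => by simpa using hx)))
      (ae_comp_nonneg hT hns (hgmeas k hk) (hgnn k hk)) (hstep_set k hk)
    filter_upwards [this] with x hx hxF
    exact hx hxF
  -- forward invariance of E i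
  have hstep'_set : ∀ i ∈ Finset.Icc 1 s', ∀ j ∈ Finset.Icc 1 (r' i),
      ∀ᵐ x ∂m, 0 < g' i j x → 0 < g' i (cyc (r' i) j) (T x) := by
    intro i hi j hj
    simp only [Finset.mem_Icc] at hj
    by_cases hjr : j = r' i
    · have h0 := (hcyc i hi).2
      have hae : ∀ᵐ x ∂m, x ∉ ({x | 0 < g' i (r' i) x} \ T ⁻¹' {x | 0 < g' i 1 x}) :=
        measure_eq_zero_iff_ae_notMem.1 h0
      filter_upwards [hae] with x hx hpos
      rw [show cyc (r' i) j = 1 by unfold cyc; simp [hjr]]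
      by_contra hcon
      exact hx ⟨by rw [← hjr]; exact hpos, fun hmem => hcon hmem⟩
    · have hjm : j ∈ Finset.Icc 1 (r' i - 1) := by
        simp only [Finset.mem_Icc]; omega
      have h0 := (hcyc i hi).1 j hjm
      have hae : ∀ᵐ x ∂m, x ∉ ({x | 0 < g' i j x} \ T ⁻¹' {x | 0 < g' i (j+1) x}) :=
        measure_eq_zero_iff_ae_notMem.1 h0
      filter_upwards [hae] with x hx hpos
      rw [show cyc (r' i) j = j + 1 by unfold cyc; simp [hjr]]
      by_contra hcon
      exact hx ⟨hpos, fun hmem => hcon hmem⟩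
  have hEinv : ∀ i ∈ Finset.Icc 1 s', ∀ᵐ x ∂m, x ∈ E i → T x ∈ E i := by
    intro i hi
    have := avg_fwd_inv (m := m) (T := T) (hr' i hi)
      (ae_ball_mem₁ (fun j hj => (hg'nn i hi j hj).mono (fun x hx => by simpa using hx)))
      (ae_comp_nonneg hT hns (hg'meas i hi) (hg'nn i hi)) (hstep'_set i hi)
    filter_upwards [this] with x hx hxE
    exact hx hxE
  -- main per-i statement
  have hmain : ∀ i ∈ Finset.Icc 1 s',
      0 < m (E i ∩ ⋃ k ∈ Finset.Icc 1 s, F k) ∧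
      ∀ k ∈ Finset.Icc 1 s, m (F k \ E i) = 0 ∨ m (E i ∩ F k) = 0 := by
    intro i hi
    -- the density f_a = avg of the g' i j
    set fa : X → ℝ := avgDens (r' i) (g' i) with hfa
    have hfa_int : Integrable fa m := by
      have : Integrable (fun x => ((r' i : ℝ))⁻¹ *
          ∑ j ∈ Finset.Icc 1 (r' i), g' i j x) m :=
        (integrable_finset_sum _ (fun j hj => hg'int i hi j hj)).const_mul _
      exact this
    have hfa_nn : 0 ≤ᵐ[m] fa := by
      filter_upwards [hg'nnP] with x hx
      have : (0:ℝ) ≤ ((r' i : ℝ))⁻¹ * ∑ j ∈ Finset.Icc 1 (r' i), g' i j x :=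
        mul_nonneg (by positivity) (Finset.sum_nonneg (fun j hj => hx i hi j hj))
      exact this
    have hfa1 : ∫ x, fa x ∂m = 1 :=
      avg_integral_one (hr' i hi) (hg'int i hi) (hg'1 i hi)
    have hfa_supp : ∀ᵐ x ∂m, x ∉ E i → fa x = 0 := by
      filter_upwards [hfa_nn] with x hx hxE
      have hxE' : ¬ 0 < fa x := hxE
      exact le_antisymm (not_lt.1 hxE') hx
    have hconva := hconvall fa hfa_int
    obtain ⟨hHnn_a, hHint_a, hHsupp_a⟩ := key hL hT hr hgint hstep hfa_int hfa_nn
      (c := fun k j => Λ k j (hfa_int.toL1 fa)) hconva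
    constructor
    · -- part (a)
      rw [pos_iff_ne_zero]
      intro hz
      have haz : ∀ᵐ x ∂m, x ∉ (E i ∩ ⋃ k ∈ Finset.Icc 1 s, F k) :=
        measure_eq_zero_iff_ae_notMem.1 hz
      have h1 := hHsupp_a (E i) (hEmeas i hi) (hEinv i hi) hfa_supp 0
      have hH0 : (fun x => ∑ k ∈ Finset.Icc 1 s, ∑ j ∈ Finset.Icc 1 (r k),
          Λ k j (hfa_int.toL1 fa) * g k j x) =ᵐ[m] 0 := by
        filter_upwards [haz, h1, hgnnP] with x hxz hx1 hxnn
        simp only [Function.iterate_zero, id_eq] at hx1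
        by_cases hxE : x ∈ E i
        · have hxU : x ∉ ⋃ k ∈ Finset.Icc 1 s, F k := fun hxU => hxz ⟨hxE, hxU⟩
          have hzero : ∀ k ∈ Finset.Icc 1 s, ∀ j ∈ Finset.Icc 1 (r k), g k j x = 0 := by
            intro k hk j hj
            have hxF : x ∉ F k := fun hxF => hxU (Set.mem_biUnion hk hxF)
            have : ¬ 0 < avgDens (r k) (g k) x := hxF
            rw [avg_pos_iff (hr k hk) (fun l hl => hxnn k hk l hl)] at this
            push_neg at this
            exact le_antisymm (this j hj) (hxnn k hk j hj)
          have : (∑ k ∈ Finset.Icc 1 s, ∑ j ∈ Finset.Icc 1 (r k),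
              Λ k j (hfa_int.toL1 fa) * g k j x) = 0 :=
            Finset.sum_eq_zero (fun k hk => Finset.sum_eq_zero (fun j hj => by
              rw [hzero k hk j hj, mul_zero]))
          simpa using this
        · simpa using hx1 hxE
      have h2 : ∫ x, (∑ k ∈ Finset.Icc 1 s, ∑ j ∈ Finset.Icc 1 (r k),
          Λ k j (hfa_int.toL1 fa) * g k j x) ∂m = 0 := by
        rw [integral_congr_ae hH0]
        simp
      rw [hHint_a, hfa1] at h2
      exact one_ne_zero h2
    · -- part (b)
      intro k hk
      by_cases hEF : m (E i ∩ F k) = 0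
      · exact Or.inr hEF
      left
      have hposEF : 0 < m (E i ∩ F k) := pos_iff_ne_zero.2 hEF
      set fb : X → ℝ := (F k).indicator fa with hfb
      have hfb_int : Integrable fb m := hfa_int.indicator (hFmeas k hk)
      have hfb_nn : 0 ≤ᵐ[m] fb := by
        filter_upwards [hfa_nn] with x hx
        by_cases hxF : x ∈ F k
        . simpa [hfb, Set.indicator_of_mem hxF] using hx
        . simp [hfb, Set.indicator_of_notMem hxF]
      have hfb_suppE : ∀ᵐ x ∂ m, x ∉ E i → fb x = 0 := by
        filter_upwards [hfa_supp] with x hx hxE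
        by_cases hxF : x ∈ F k
        . rw [hfb, Set.indicator_of_mem hxF]
          exact hx hxE
        . rw [hfb, Set.indicator_of_notMem hxF]
      have hfb_suppF : ∀ᵐ x ∂ m, x ∉ F k → fb x = 0 :=
        Filter.Eventually.of_forall (fun x hx => Set.indicator_of_notMem hx fa)
      have hfbpos : 0 < ∫ x, fb x ∂m := by
        rw [hfb, integral_indicator (hFmeas k hk)]
        rw [setIntegral_pos_iff_support_of_nonneg_ae (ae_restrict_of_ae hfa_nn)
          hfa_int.integrableOn]
        refine lt_of_lt_of_le hposEF (measure_mono ?_)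
        rintro x ⟨hxE, hxF⟩
        exact ⟨ne_of_gt hxE, hxF⟩
      have hconvb := hconvall fb hfb_int
      obtain ⟨hHnn_b, hHint_b, hHsupp_b⟩ := key hL hT hr hgint hstep hfb_int hfb_nn
        (c := fun k' j' => Λ k' j' (hfb_int.toL1 fb)) hconvb
      set cb : ℕ → ℕ → ℝ := fun k' j' => Λ k' j' (hfb_int.toL1 fb) with hcb
      have hsuppEb := hHsupp_b (E i) (hEmeas i hi) (hEinv i hi) hfb_suppE
      have hsuppFb := hHsupp_b (F k) (hFmeas k hk) (hFinv k hk) hfb_suppF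
      -- coefficients vanish off k
      have hcb0 : ∀ k' ∈ Finset.Icc 1 s, k' ≠ k → ∀ j' ∈ Finset.Icc 1 (r k'), cb k' j' = 0 := by
        intro k' hk' hne j' hj'
        by_contra hcbne
        have hposA : 0 < m {x | 0 < g k' j' x} :=
          pos_meas_of_integral_ne_zero (hgint k' hk' j' hj')
            (by rw [hg1 k' hk' j' hj']; exact one_ne_zero) (hgnn k' hk' j' hj')
        have hext0 := coeff_extract (m := m) (c := cb) hr horthP 0 hk' hj'
        have hnm : ∀ᵐ x ∂ m, x ∉ {x | 0 < g k' j' x} := by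
          filter_upwards [hext0, hsuppFb 0, hgnnP, horthP] with x hxext hxF hxnn hxorth hxA
          have hxA' : 0 < g k' j' x := hxA
          have hxnotF : x ∉ F k := by
            intro hxF'
            obtain ⟨l, hl, hlpos⟩ := (avg_pos_iff (hr k hk) (fun l hl => hxnn k hk l hl)).1 hxF'
            have := hxorth k' hk' j' hj' k hk l hl (by simp only [Ne, Prod.mk.injEq, not_and]; intro h; exact absurd h hne)
            nlinarith
          simp only [Function.iterate_zero, id_eq] at hxext hxF
          have h1 := hxF hxnotF
          have h2 := hxext hxA'
          rw [h1] at h2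
          exact absurd h2.symm (mul_ne_zero hcbne hxA'.ne')
        exact absurd (measure_eq_zero_iff_ae_notMem.2 hnm) hposA.ne'
      -- sum of coefficients over k equals integral of fb
      have hintexp : ∫ x, (∑ k' ∈ Finset.Icc 1 s, ∑ j' ∈ Finset.Icc 1 (r k'),
          cb k' j' * g k' j' x) ∂m = ∑ k' ∈ Finset.Icc 1 s, ∑ j' ∈ Finset.Icc 1 (r k'), cb k' j' := by
        rw [integral_finset_sum _ (fun k' hk' => integrable_finset_sum _
          (fun j' hj' => (hgint k' hk' j' hj').const_mul _))]
        refine Finset.sum_congr rfl (fun k' hk' => ?_)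
        rw [integral_finset_sum _ (fun j' hj' => (hgint k' hk' j' hj').const_mul _)]
        refine Finset.sum_congr rfl (fun j' hj' => ?_)
        rw [integral_const_mul, hg1 k' hk' j' hj', mul_one]
      have hsumk : ∑ j' ∈ Finset.Icc 1 (r k), cb k j' = ∫ x, fb x ∂m := by
        rw [← hHint_b, hintexp]
        rw [Finset.sum_eq_single_of_mem k hk]
        intro k' hk' hne
        exact Finset.sum_eq_zero (fun j' hj' => hcb0 k' hk' hne j' hj')
      have hexj : ∃ j ∈ Finset.Icc 1 (r k), 0 < cb k j := by
        by_contra hcon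
        push_neg at hcon
        have : ∑ j' ∈ Finset.Icc 1 (r k), cb k j' <= 0 :=
          Finset.sum_nonpos (fun j' hj' => hcon j' hj')
        rw [hsumk] at this
        exact absurd this (not_le.2 hfbpos)
      obtain ⟨j, hj, hcbj⟩ := hexj
      -- each support of g k j' is a.e. inside E i
      have hAE : ∀ j' ∈ Finset.Icc 1 (r k), m ({x | 0 < g k j' x} \ E i) = 0 := by
        intro j' hj'
        obtain ⟨n, hn⟩ := cyc_surj hj hj'
        have hext := coeff_extract (m := m) (c := cb) hr horthP n hk hj
        rw [hn] at hext
        refine measure_eq_zero_iff_ae_notMem.2 ?_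
        filter_upwards [hext, hsuppEb n] with x hxext hxE hxmem
        obtain ⟨hpos, hnE⟩ := hxmem
        have hpos' : 0 < g k j' x := hpos
        have h1 := hxE hnE
        have h2 := hxext hpos'
        rw [h1] at h2
        exact absurd h2.symm (mul_ne_zero hcbj.ne' hpos'.ne')
      refine measure_eq_zero_iff_ae_notMem.2 ?_
      have hAE' : ∀ᵐ x ∂ m, ∀ j' ∈ Finset.Icc 1 (r k), x ∉ ({x | 0 < g k j' x} \ E i) :=
        ae_ball_mem₁ (fun j' hj' => measure_eq_zero_iff_ae_notMem.1 (hAE j' hj'))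
      filter_upwards [hgnnP, hAE'] with x hxnn hxA hxmem
      obtain ⟨hxF, hxnE⟩ := hxmem
      have hxF' : 0 < avgDens (r k) (g k) x := hxF
      obtain ⟨j', hj', hpos⟩ := (avg_pos_iff (hr k hk) (fun l hl => hxnn k hk l hl)).1 hxF'
      exact hxA j' hj' ⟨hpos, hxnE⟩

  have hEdisj : ∀ i ∈ Finset.Icc 1 s', ∀ i' ∈ Finset.Icc 1 s', i ≠ i' → m (E i ∩ E i') = 0 := by
    intro i hi i' hi' hne
    refine measure_eq_zero_iff_ae_notMem.2 ?_
    filter_upwards [hg'nnP, horth'P] with x hxnn hxorth hxmem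
    obtain ⟨h1, h2⟩ := hxmem
    have h1' : 0 < avgDens (r' i) (g' i) x := h1
    have h2' : 0 < avgDens (r' i') (g' i') x := h2
    obtain ⟨j, hj, hjpos⟩ := (avg_pos_iff (hr' i hi) (fun l hl => hxnn i hi l hl)).1 h1'
    obtain ⟨j', hj', hjpos'⟩ := (avg_pos_iff (hr' i' hi') (fun l hl => hxnn i' hi' l hl)).1 h2'
    have := hxorth i hi j hj i' hi' j' hj'
      (by simp only [Ne, Prod.mk.injEq, not_and]; intro h; exact absurd h hne)
    nlinarith
  have hFpos : ∀ k ∈ Finset.Icc 1 s, 0 < m (F k) := by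
    intro k hk
    have hint : Integrable (avgDens (r k) (g k)) m := by
      have : Integrable (fun x => ((r k : ℝ))⁻¹ * ∑ j ∈ Finset.Icc 1 (r k), g k j x) m :=
        (integrable_finset_sum _ (fun j hj => hgint k hk j hj)).const_mul _
      exact this
    have hnn : 0 ≤ᵐ[m] avgDens (r k) (g k) := by
      filter_upwards [hgnnP] with x hx
      have : (0:ℝ) ≤ ((r k : ℝ))⁻¹ * ∑ j ∈ Finset.Icc 1 (r k), g k j x :=
        mul_nonneg (by positivity) (Finset.sum_nonneg (fun j hj => hx k hk j hj))
      exact this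
    have h1 : ∫ x, avgDens (r k) (g k) x ∂m = 1 :=
      avg_integral_one (hr k hk) (hgint k hk) (hg1 k hk)
    exact pos_meas_of_integral_ne_zero hint (by rw [h1]; exact one_ne_zero) hnn
  have hchoice : ∀ i ∈ Finset.Icc 1 s', ∃ k ∈ Finset.Icc 1 s,
      m (E i ∩ F k) ≠ 0 ∧ m (F k \ E i) = 0 := by
    intro i hi
    obtain ⟨ha, hb⟩ := hmain i hi
    have hex : ∃ k ∈ Finset.Icc 1 s, m (E i ∩ F k) ≠ 0 := by
      by_contra hcon
      push_neg at hcon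
      have hzero : m (E i ∩ ⋃ k ∈ Finset.Icc 1 s, F k) = 0 := by
        have heq : E i ∩ ⋃ k ∈ Finset.Icc 1 s, F k
            = ⋃ k ∈ ((Finset.Icc 1 s : Finset ℕ) : Set ℕ), (E i ∩ F k) := by
          rw [Set.inter_iUnion₂]
          simp
        rw [heq, measure_biUnion_null_iff (Finset.Icc 1 s).countable_toSet]
        intro k hk
        exact hcon k (by simpa using hk)
      exact absurd hzero ha.ne'
    obtain ⟨k, hk, hkne⟩ := hex
    refine ⟨k, hk, hkne, ?_⟩
    rcases hb k hk with h | h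
    · exact h
    · exact absurd h hkne
  refine ⟨fun i hi => hmain i hi, ?_⟩
  set φ : ℕ → ℕ := fun i => if h : i ∈ Finset.Icc 1 s' then (hchoice i h).choose else 0 with hφ
  have hφspec : ∀ i ∈ Finset.Icc 1 s', φ i ∈ Finset.Icc 1 s ∧
      m (E i ∩ F (φ i)) ≠ 0 ∧ m (F (φ i) \ E i) = 0 := by
    intro i hi
    have h := (hchoice i hi).choose_spec
    rw [hφ]
    simp only [dif_pos hi]
    exact ⟨h.1, h.2⟩
  have hinj : Set.InjOn φ ((Finset.Icc 1 s' : Finset ℕ) : Set ℕ) := by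
    intro i hi i' hi' heq
    by_contra hne
    have hi2 : i ∈ Finset.Icc 1 s' := by simpa using hi
    have hi3 : i' ∈ Finset.Icc 1 s' := by simpa using hi'
    obtain ⟨hk, hne1, hz1⟩ := hφspec i hi2
    obtain ⟨-, -, hz2⟩ := hφspec i' hi3
    rw [heq] at hz1 hk
    have hsub : F (φ i') ⊆ (F (φ i') \ E i) ∪ ((F (φ i') \ E i') ∪ (E i ∩ E i')) := by
      intro x hx
      by_cases h1 : x ∈ E i
      · by_cases h2 : x ∈ E i'
        · exact Or.inr (Or.inr ⟨h1, h2⟩)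
        · exact Or.inr (Or.inl ⟨hx, h2⟩)
      · exact Or.inl ⟨hx, h1⟩
    have hzz : m (F (φ i')) = 0 := by
      refine le_antisymm ?_ zero_le
      calc m (F (φ i')) ≤ m ((F (φ i') \ E i) ∪ ((F (φ i') \ E i') ∪ (E i ∩ E i'))) :=
            measure_mono hsub
      _ ≤ m (F (φ i') \ E i) + (m (F (φ i') \ E i') + m (E i ∩ E i')) :=
            le_trans (measure_union_le _ _) (by gcongr; exact measure_union_le _ _)
      _ = 0 := by rw [hz1, hz2, hEdisj i hi2 i' hi3 hne]; simp
    exact absurd hzz (hFpos (φ i') hk).ne'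
  have hcard := Finset.card_le_card_of_injOn φ (fun i hi => (hφspec i hi).1) hinj
  simpa [Nat.card_Icc] using hcard
end
end

section
/- Let (X, 𝓕, m) be a probability space, T an m-nonsingular transformation, and suppose the Perron–Frobenius operator 𝓛_T is asymptotically periodic with data s, r(k), g_{k,j}, λ_{k,j}. Suppose ĝ_{i,j} ∈ L¹(m) (1 ≤ i ≤ ŝ, 1 ≤ j ≤ r̂(i)) are probability density functions with ĝ_{i,j}·ĝ_{k,l} = 0 m-a.e. for (i,j) ≠ (k,l), satisfying the support-cycling condition m({ĝ_{i,j} > 0} \ T⁻¹{ĝ_{i,j+1} > 0}) = 0 for 1 ≤ j ≤ r̂(i)−1 and m({ĝ_{i,r̂(i)} > 0} \ T⁻¹{ĝ_{i,1} > 0}) = 0; set ĝ_i = (1/r̂(i)) Σ_j ĝ_{i,j} and g_k = (1/r(k)) Σ_j g_{k,j}. Fix i ∈ {1,…,ŝ} and suppose k₀ ∈ {1,…,s} satisfies m({g_{k₀} > 0} \ {ĝ_i > 0}) = 0. Then r̂(i) divides r(k₀). -/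
open MeasureTheory Filter Topology

noncomputable section

section AuxNat

/-- cyclic successor on `{1, …, R}` -/
def nxt (R j : ℕ) : ℕ := if j = R then 1 else j + 1

lemma nxt_iter (R : ℕ) (hR : 1 ≤ R) {j : ℕ} (h1 : 1 ≤ j) (h2 : j ≤ R) (n : ℕ) :
    (nxt R)^[n] j = (j - 1 + n) % R + 1 := by
  induction n with
  | zero => simp [Nat.mod_eq_of_lt (by omega : j - 1 < R)]; omega
  | succ n ih =>
    rw [Function.iterate_succ_apply', ih]
    have ha : (j - 1 + n) % R < R := Nat.mod_lt _ (by omega)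
    have h2' : (j - 1 + (n + 1)) % R = ((j - 1 + n) % R + 1) % R := by
      rw [Nat.mod_add_mod, Nat.add_assoc]
    rw [h2']
    set a := (j - 1 + n) % R with hadef
    unfold nxt
    by_cases hc : a + 1 = R
    · rw [if_pos hc, hc, Nat.mod_self]
    · rw [if_neg hc, Nat.mod_eq_of_lt (by omega)]

lemma nxt_mem (R : ℕ) (hR : 1 ≤ R) {j : ℕ} (h1 : 1 ≤ j) (h2 : j ≤ R) (n : ℕ) :
    1 ≤ (nxt R)^[n] j ∧ (nxt R)^[n] j ≤ R := by
  rw [nxt_iter R hR h1 h2 n]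
  have := Nat.mod_lt (j - 1 + n) (show 0 < R by omega)
  omega

lemma nxt_iter_of_dvd (R : ℕ) (hR : 1 ≤ R) {j : ℕ} (h1 : 1 ≤ j) (h2 : j ≤ R) {n : ℕ}
    (hn : R ∣ n) : (nxt R)^[n] j = j := by
  rw [nxt_iter R hR h1 h2 n]
  obtain ⟨t, rfl⟩ := hn
  rw [Nat.add_mul_mod_self_left, Nat.mod_eq_of_lt (by omega)]
  omega

lemma nxt_iter_fixed (R : ℕ) (hR : 1 ≤ R) {j : ℕ} (h1 : 1 ≤ j) (h2 : j ≤ R) {n : ℕ}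
    (h : (nxt R)^[n] j = j) : R ∣ n := by
  rw [nxt_iter R hR h1 h2 n] at h
  have h' : (j - 1 + n) % R = (j - 1) % R := by
    rw [Nat.mod_eq_of_lt (by omega : j - 1 < R)]; omega
  have := (Nat.modEq_iff_dvd' (Nat.le_add_right _ _)).1 h'.symm
  simpa using this

end AuxNat

section AuxL

variable {X : Type*} [MeasurableSpace X] {m : Measure X} [IsProbabilityMeasure m]

lemma aeEqOfSet {f h : X → ℝ} (hf : Integrable f m) (hh : Integrable h m)
    (he : ∀ A : Set X, MeasurableSet A → ∫ x in A, f x ∂m = ∫ x in A, h x ∂m) :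
    f =ᵐ[m] h :=
  ae_eq_of_forall_setIntegral_eq_of_sigmaFinite
    (fun s hs _ => hf.integrableOn) (fun s hs _ => hh.integrableOn)
    (fun s hs _ => he s hs)

variable {T : X → X} {L : (X → ℝ) → X → ℝ}

lemma L_int (hL : IsPF m T L) {f : X → ℝ} (hf : Integrable f m) :
    Integrable (L f) m := (hL f hf).1

lemma L_unique (hL : IsPF m T L) {f ψ : X → ℝ} (hf : Integrable f m) (hψ : Integrable ψ m)
    (he : ∀ A : Set X, MeasurableSet A → ∫ x in T ⁻¹' A, f x ∂m = ∫ x in A, ψ x ∂m) :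
    L f =ᵐ[m] ψ :=
  aeEqOfSet (L_int hL hf) hψ fun A hA => ((hL f hf).2 A hA).trans (he A hA)

lemma L_congr (hL : IsPF m T L) {f h : X → ℝ} (hf : Integrable f m) (hh : Integrable h m)
    (he : f =ᵐ[m] h) : L f =ᵐ[m] L h :=
  L_unique hL hf (L_int hL hh) fun A hA => by
    rw [integral_congr_ae (ae_restrict_of_ae he)]
    exact ((hL h hh).2 A hA).symm

lemma L_nonneg (hL : IsPF m T L) {f : X → ℝ} (hf : Integrable f m) (h0 : 0 ≤ᵐ[m] f) :
    0 ≤ᵐ[m] L f :=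
  ae_nonneg_of_forall_setIntegral_nonneg (L_int hL hf) fun A hA _ => by
    rw [(hL f hf).2 A hA]
    exact integral_nonneg_of_ae (ae_restrict_of_ae h0)

lemma L_mono (hL : IsPF m T L) {f h : X → ℝ} (hf : Integrable f m) (hh : Integrable h m)
    (he : f ≤ᵐ[m] h) : L f ≤ᵐ[m] L h := by
  have key : 0 ≤ᵐ[m] fun x => L h x - L f x := by
    refine ae_nonneg_of_forall_setIntegral_nonneg
      (((L_int hL hh)).sub (L_int hL hf)) fun A hA _ => ?_
    rw [integral_sub (L_int hL hh).integrableOn (L_int hL hf).integrableOn,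
      (hL h hh).2 A hA, (hL f hf).2 A hA, sub_nonneg]
    exact integral_mono_ae hf.integrableOn hh.integrableOn (ae_restrict_of_ae he)
  filter_upwards [key] with x hx
  simpa [sub_nonneg] using hx

lemma L_total (hL : IsPF m T L) {f : X → ℝ} (hf : Integrable f m) :
    ∫ x, L f x ∂m = ∫ x, f x ∂m := by
  have := (hL f hf).2 Set.univ MeasurableSet.univ
  simpa using this

lemma L_vanish (hL : IsPF m T L) (hT : Measurable T) {f : X → ℝ} (hf : Integrable f m)
    (h0 : 0 ≤ᵐ[m] f) {B B' : Set X} (hB' : MeasurableSet B')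
    (hnull : m (B \ T ⁻¹' B') = 0) (hoff : ∀ᵐ x ∂m, x ∉ B → f x = 0) :
    ∀ᵐ x ∂m, x ∉ B' → L f x = 0 := by
  have h1 : ∀ᵐ x ∂m, x ∉ B \ T ⁻¹' B' := (measure_eq_zero_iff_ae_notMem).1 hnull
  have hoff' : ∀ᵐ x ∂m, x ∉ T ⁻¹' B' → f x = 0 := by
    filter_upwards [h1, hoff] with x hx hfx hmem
    by_cases hB : x ∈ B
    · exact absurd ⟨hB, hmem⟩ hx
    · exact hfx hB
  have hz : ∫ x in (T ⁻¹' B')ᶜ, f x ∂m = 0 := by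
    have hres : f =ᵐ[m.restrict (T ⁻¹' B')ᶜ] 0 := by
      rw [EventuallyEq, ae_restrict_iff' (hT hB').compl]
      filter_upwards [hoff'] with x h hx using h hx
    rw [integral_congr_ae hres]; simp
  have hLz : ∫ x in B'ᶜ, L f x ∂m = 0 := by
    rw [(hL f hf).2 _ hB'.compl, Set.preimage_compl]; exact hz
  have hnn := L_nonneg hL hf h0
  have hres : L f =ᵐ[m.restrict B'ᶜ] 0 :=
    (integral_eq_zero_iff_of_nonneg_ae (ae_restrict_of_ae hnn)
      (L_int hL hf).integrableOn).1 hLz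
  rw [EventuallyEq, ae_restrict_iff' hB'.compl] at hres
  filter_upwards [hres] with x hx hxB using hx hxB

lemma evolve (hL : IsPF m T L) (hT : Measurable T) {G : ℕ → X → ℝ} {A : ℕ → Set X}
    (hGint : ∀ n, Integrable (G n) m)
    (hGcyc : ∀ n, L (G n) =ᵐ[m] G (n + 1))
    (hAmeas : ∀ n, MeasurableSet (A n))
    (hAcyc : ∀ n, m (A n \ T ⁻¹' A (n + 1)) = 0)
    {u : X → ℝ} (hu : Integrable u m) (hu0 : 0 ≤ᵐ[m] u) (huG : u ≤ᵐ[m] G 0)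
    (huA : ∀ᵐ x ∂m, x ∉ A 0 → u x = 0) (n : ℕ) :
    Integrable (L^[n] u) m ∧ 0 ≤ᵐ[m] L^[n] u ∧ L^[n] u ≤ᵐ[m] G n ∧
      (∀ᵐ x ∂m, x ∉ A n → L^[n] u x = 0) ∧ ∫ x, L^[n] u x ∂m = ∫ x, u x ∂m := by
  induction n with
  | zero => exact ⟨hu, hu0, huG, huA, rfl⟩
  | succ n ih =>
    obtain ⟨hint, hnn, hle, hoff, hI⟩ := ih
    rw [Function.iterate_succ_apply']
    refine ⟨L_int hL hint, L_nonneg hL hint hnn, ?_, ?_, ?_⟩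
    · exact (L_mono hL hint (hGint n) hle).trans (hGcyc n).le
    · exact L_vanish hL hT hint hnn (hAmeas (n + 1)) (hAcyc n) hoff
    · rw [L_total hL hint]; exact hI

lemma evolve_eq (hL : IsPF m T L) {G : ℕ → X → ℝ}
    (hGint : ∀ n, Integrable (G n) m)
    (hGcyc : ∀ n, L (G n) =ᵐ[m] G (n + 1))
    (hiter : ∀ n, Integrable (L^[n] (G 0)) m) (n : ℕ) :
    L^[n] (G 0) =ᵐ[m] G n := by
  induction n with
  | zero => rfl
  | succ n ih =>
    rw [Function.iterate_succ_apply']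
    exact (L_congr hL (hiter n) (hGint n) ih).trans (hGcyc n)

end AuxL

/-- **Theorem 3.1(2).** Let `𝓛_T` be asymptotically periodic with data
`s, r, g, Λ` and let `ĝ_{i,j}` (`1 ≤ i ≤ s', 1 ≤ j ≤ r' i`) be mutually
orthogonal probability densities whose supports are cycled by `T`; set
`ĝ_i = (1/r' i) ∑_j ĝ_{i,j}` and `g_k = (1/r k) ∑_j g_{k,j}`.  If
`m({g_{k₀} > 0} \ {ĝ_i > 0}) = 0` for some `i ∈ {1,…,s'}` and
`k₀ ∈ {1,…,s}`, then `r' i` divides `r k₀`. -/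
theorem stmt_1 {X : Type*} [MeasurableSpace X] (m : Measure X) [IsProbabilityMeasure m]
    (T : X → X) (hT : Measurable T)
    (hns : ∀ A : Set X, MeasurableSet A → m A = 0 → m (T ⁻¹' A) = 0)
    (L : (X → ℝ) → X → ℝ) (hL : IsPF m T L)
    (s : ℕ) (r : ℕ → ℕ) (g : ℕ → ℕ → X → ℝ) (Λ : ℕ → ℕ → (X →₁[m] ℝ) →L[ℝ] ℝ)
    (hap : AsympPeriodic m L s r g Λ)
    (s' : ℕ) (r' : ℕ → ℕ) (g' : ℕ → ℕ → X → ℝ)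
    (hs' : 1 ≤ s') (hr' : ∀ i ∈ Finset.Icc 1 s', 1 ≤ r' i)
    (hdens : ∀ i ∈ Finset.Icc 1 s', ∀ j ∈ Finset.Icc 1 (r' i),
      Measurable (g' i j) ∧ Integrable (g' i j) m ∧ 0 ≤ᵐ[m] g' i j ∧ ∫ x, g' i j x ∂m = 1)
    (horth : ∀ i ∈ Finset.Icc 1 s', ∀ j ∈ Finset.Icc 1 (r' i), ∀ k ∈ Finset.Icc 1 s',
      ∀ l ∈ Finset.Icc 1 (r' k), (i, j) ≠ (k, l) →
        (fun x => g' i j x * g' k l x) =ᵐ[m] 0)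
    (hcyc : ∀ i ∈ Finset.Icc 1 s',
      (∀ j ∈ Finset.Icc 1 (r' i - 1),
        m ({x | 0 < g' i j x} \ T ⁻¹' {x | 0 < g' i (j + 1) x}) = 0) ∧
        m ({x | 0 < g' i (r' i) x} \ T ⁻¹' {x | 0 < g' i 1 x}) = 0)
    (i : ℕ) (hi : i ∈ Finset.Icc 1 s') (k₀ : ℕ) (hk₀ : k₀ ∈ Finset.Icc 1 s)
    (hsupp : m ({x | 0 < avgDens (r k₀) (g k₀) x} \
        {x | 0 < avgDens (r' i) (g' i) x}) = 0) :
    r' i ∣ r k₀ := by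
  classical
  obtain ⟨hs1, hrpos, hgdens, hgorth, hgcycl, hlim⟩ := hap
  have hR : 1 ≤ r' i := hr' i hi
  have hrr : 1 ≤ r k₀ := hrpos k₀ hk₀
  have h1mem : (1 : ℕ) ∈ Finset.Icc 1 (r k₀) := Finset.mem_Icc.mpr ⟨le_rfl, hrr⟩
  set Aset : ℕ → Set X := fun j => {x | 0 < g' i j x} with hAsetdef
  have hAmeas : ∀ j, 1 ≤ j → j ≤ r' i → MeasurableSet (Aset j) := fun j h1 h2 =>
    measurableSet_lt measurable_const (hdens i hi j (Finset.mem_Icc.mpr ⟨h1, h2⟩)).1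
  have hg1int : Integrable (g k₀ 1) m := (hgdens k₀ hk₀ 1 h1mem).2.1
  have hg1nn : 0 ≤ᵐ[m] g k₀ 1 := (hgdens k₀ hk₀ 1 h1mem).2.2.1
  have hg1I : ∫ x, g k₀ 1 x ∂m = 1 := (hgdens k₀ hk₀ 1 h1mem).2.2.2
  -- step relations
  have hgstep : ∀ k ∈ Finset.Icc 1 s, ∀ l, 1 ≤ l → l ≤ r k →
      L (g k l) =ᵐ[m] g k (nxt (r k) l) := by
    intro k hk l h1 h2
    obtain ⟨hc1, hc2⟩ := hgcycl k hk
    by_cases hl : l = r k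
    · subst hl; simpa [nxt] using hc2
    · have hmem : l ∈ Finset.Icc 1 (r k - 1) := Finset.mem_Icc.mpr ⟨h1, by omega⟩
      simpa [nxt, hl] using hc1 l hmem
  have hAstep : ∀ j, 1 ≤ j → j ≤ r' i → m (Aset j \ T ⁻¹' Aset (nxt (r' i) j)) = 0 := by
    intro j h1 h2
    obtain ⟨hc1, hc2⟩ := hcyc i hi
    by_cases hl : j = r' i
    · subst hl; simpa [nxt, hAsetdef] using hc2
    · have hmem : j ∈ Finset.Icc 1 (r' i - 1) := Finset.mem_Icc.mpr ⟨h1, by omega⟩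
      simpa [nxt, hl, hAsetdef] using hc1 j hmem
  -- the evolved families
  have hGGint : ∀ n, Integrable (g k₀ ((nxt (r k₀))^[n] 1)) m := by
    intro n
    obtain ⟨h1, h2⟩ := nxt_mem (r k₀) hrr le_rfl hrr n
    exact (hgdens k₀ hk₀ _ (Finset.mem_Icc.mpr ⟨h1, h2⟩)).2.1
  have hGGcyc : ∀ n, L (g k₀ ((nxt (r k₀))^[n] 1)) =ᵐ[m] g k₀ ((nxt (r k₀))^[n + 1] 1) := by
    intro n
    obtain ⟨h1, h2⟩ := nxt_mem (r k₀) hrr le_rfl hrr n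
    have := hgstep k₀ hk₀ _ h1 h2
    rwa [← Function.iterate_succ_apply' (nxt (r k₀)) n 1] at this
  have hAAmeas : ∀ j, 1 ≤ j → j ≤ r' i → ∀ n,
      MeasurableSet (Aset ((nxt (r' i))^[n] j)) := by
    intro j h1 h2 n
    obtain ⟨hh1, hh2⟩ := nxt_mem (r' i) hR h1 h2 n
    exact hAmeas _ hh1 hh2
  have hAAcyc : ∀ j, 1 ≤ j → j ≤ r' i → ∀ n,
      m (Aset ((nxt (r' i))^[n] j) \ T ⁻¹' Aset ((nxt (r' i))^[n + 1] j)) = 0 := by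
    intro j h1 h2 n
    obtain ⟨hh1, hh2⟩ := nxt_mem (r' i) hR h1 h2 n
    have := hAstep _ hh1 hh2
    rwa [← Function.iterate_succ_apply' (nxt (r' i)) n j] at this

  -- ===== KEY CLAIM =====
  have key : ∀ j, 1 ≤ j → j ≤ r' i → (∫ x in Aset j, g k₀ 1 x ∂m ≠ 0) →
      (∀ᵐ x ∂m, x ∉ Aset j → g k₀ 1 x = 0) := by
    intro j hj1 hj2 hcne
    have hAj : MeasurableSet (Aset j) := hAmeas j hj1 hj2
    set u : X → ℝ := (Aset j).indicator (g k₀ 1) with hudef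
    have hu : Integrable u m := hg1int.indicator hAj
    have hu0 : 0 ≤ᵐ[m] u := by
      filter_upwards [hg1nn] with x hx
      exact Set.indicator_apply_nonneg fun _ => hx
    have huG : u ≤ᵐ[m] g k₀ 1 := by
      filter_upwards [hg1nn] with x hx
      simp only [Pi.zero_apply] at hx
      by_cases hxx : x ∈ Aset j <;>
        simp [hudef, Set.indicator_of_mem, Set.indicator_of_notMem, hxx, hx]
    have huA : ∀ᵐ x ∂m, x ∉ Aset j → u x = 0 :=
      Filter.Eventually.of_forall fun x hx => Set.indicator_of_notMem hx _
    have hU : ∀ n, Integrable (L^[n] u) m ∧ 0 ≤ᵐ[m] L^[n] u ∧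
        L^[n] u ≤ᵐ[m] g k₀ ((nxt (r k₀))^[n] 1) ∧
        (∀ᵐ x ∂m, x ∉ Aset ((nxt (r' i))^[n] j) → L^[n] u x = 0) ∧
        ∫ x, L^[n] u x ∂m = ∫ x, u x ∂m :=
      fun n => evolve (G := fun n => g k₀ ((nxt (r k₀))^[n] 1))
        (A := fun n => Aset ((nxt (r' i))^[n] j)) hL hT hGGint hGGcyc
        (hAAmeas j hj1 hj2) (hAAcyc j hj1 hj2) hu hu0 huG huA n
    -- the asymptotic-periodicity limit
    set p : ℕ → X → ℝ := fun n x => ∑ k ∈ Finset.Icc 1 s, ∑ l ∈ Finset.Icc 1 (r k),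
        Λ k l (hu.toL1 u) * g k ((nxt (r k))^[n] l) x with hpdef
    have hF0 : (fun x => u x - ∑ k ∈ Finset.Icc 1 s, ∑ l ∈ Finset.Icc 1 (r k),
        Λ k l (hu.toL1 u) * g k l x) = fun x => u x - p 0 x := by
      funext x
      rw [hpdef]
      simp only [Function.iterate_zero_apply]
    have hten0 := hlim u hu
    rw [hF0] at hten0
    have hgmem : ∀ k, k ∈ Finset.Icc 1 s → ∀ l, l ∈ Finset.Icc 1 (r k) → ∀ n,
        (nxt (r k))^[n] l ∈ Finset.Icc 1 (r k) := by
      intro k hk l hl n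
      obtain ⟨h1, h2⟩ := Finset.mem_Icc.mp hl
      obtain ⟨hh1, hh2⟩ := nxt_mem (r k) (hrpos k hk) h1 h2 n
      exact Finset.mem_Icc.mpr ⟨hh1, hh2⟩
    have hpint : ∀ n, Integrable (p n) m := by
      intro n
      refine integrable_finset_sum _ fun k hk => integrable_finset_sum _ fun l hl => ?_
      exact ((hgdens k hk _ (hgmem k hk l hl n)).2.1).const_mul _
    have hpset : ∀ n, ∀ B : Set X, MeasurableSet B →
        ∫ x in T ⁻¹' B, p n x ∂m = ∫ x in B, p (n + 1) x ∂m := by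
      intro n B hB
      rw [hpdef]
      rw [integral_finset_sum _ fun k hk => (integrable_finset_sum _ fun l hl =>
            ((hgdens k hk _ (hgmem k hk l hl n)).2.1).const_mul _).integrableOn,
          integral_finset_sum _ fun k hk => (integrable_finset_sum _ fun l hl =>
            ((hgdens k hk _ (hgmem k hk l hl (n+1))).2.1).const_mul _).integrableOn]
      refine Finset.sum_congr rfl fun k hk => ?_
      rw [integral_finset_sum _ fun l hl =>
            (((hgdens k hk _ (hgmem k hk l hl n)).2.1).const_mul _).integrableOn,
          integral_finset_sum _ fun l hl =>
            (((hgdens k hk _ (hgmem k hk l hl (n+1))).2.1).const_mul _).integrableOn]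
      refine Finset.sum_congr rfl fun l hl => ?_
      rw [integral_const_mul, integral_const_mul]
      congr 1
      have hmem := hgmem k hk l hl n
      obtain ⟨h1, h2⟩ := Finset.mem_Icc.mp hmem
      have e1 := (hL (g k ((nxt (r k))^[n] l)) (hgdens k hk _ hmem).2.1).2 B hB
      have e2 : ∫ x in B, L (g k ((nxt (r k))^[n] l)) x ∂m
          = ∫ x in B, g k ((nxt (r k))^[n + 1] l) x ∂m := by
        refine integral_congr_ae (ae_restrict_of_ae ?_)
        have := hgstep k hk _ h1 h2
        rwa [← Function.iterate_succ_apply' (nxt (r k)) n l] at this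
      rw [← e1, e2]
    -- identify the iterates of the difference
    have hQ : ∀ n, Integrable (L^[n] (fun x => u x - p 0 x)) m ∧
        L^[n] (fun x => u x - p 0 x) =ᵐ[m] fun x => L^[n] u x - p n x := by
      intro n
      induction n with
      | zero => exact ⟨hu.sub (hpint 0), Filter.EventuallyEq.rfl⟩
      | succ n ih =>
        obtain ⟨ihI, ihE⟩ := ih
        have hint_n : Integrable (fun x => L^[n] u x - p n x) m := ((hU n).1).sub (hpint n)
        have hint_n1 : Integrable (fun x => L^[n + 1] u x - p (n + 1) x) m :=
          ((hU (n + 1)).1).sub (hpint (n + 1))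
        rw [Function.iterate_succ_apply']
        refine ⟨L_int hL ihI, ?_⟩
        refine (L_congr hL ihI hint_n ihE).trans ?_
        refine L_unique hL hint_n hint_n1 fun B hB => ?_
        rw [integral_sub ((hU n).1).integrableOn ((hpint n)).integrableOn,
            integral_sub ((hU (n + 1)).1).integrableOn ((hpint (n + 1))).integrableOn,
            ← hpset n B hB]
        congr 1
        have := (hL (L^[n] u) (hU n).1).2 B hB
        rw [← Function.iterate_succ_apply' L n u] at this
        exact this.symm
    -- the common period
    set M : ℕ := r k₀ * (r' i * ∏ k ∈ Finset.Icc 1 s, r k) with hMdef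
    have hMpos : 0 < M := by
      refine Nat.mul_pos (by omega) (Nat.mul_pos (by omega) ?_)
      exact Finset.prod_pos fun k hk => hrpos k hk
    have hdvd_rr : r k₀ ∣ M := Dvd.intro _ rfl
    have hdvd_R : r' i ∣ M := (dvd_mul_right (r' i) _).mul_left (r k₀)
    have hdvd_k : ∀ k ∈ Finset.Icc 1 s, r k ∣ M := fun k hk =>
      ((Finset.dvd_prod_of_mem r hk).mul_left (r' i)).mul_left (r k₀)
    have hpM : ∀ mm : ℕ, p (mm * M) = p 0 := by
      intro mm
      funext x
      rw [hpdef]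
      refine Finset.sum_congr rfl fun k hk => Finset.sum_congr rfl fun l hl => ?_
      obtain ⟨hl1, hl2⟩ := Finset.mem_Icc.mp hl
      rw [nxt_iter_of_dvd (r k) (hrpos k hk) hl1 hl2 ((hdvd_k k hk).mul_left mm),
        Function.iterate_zero_apply]
    have hGidx : ∀ mm : ℕ, (nxt (r k₀))^[mm * M] 1 = 1 := fun mm =>
      nxt_iter_of_dvd _ hrr le_rfl hrr (hdvd_rr.mul_left mm)
    have hAidx : ∀ mm : ℕ, (nxt (r' i))^[mm * M] j = j := fun mm =>
      nxt_iter_of_dvd _ hR hj1 hj2 (hdvd_R.mul_left mm)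
    have hsubseq : Tendsto (fun mm : ℕ => mm * M) atTop atTop :=
      tendsto_atTop_mono (fun n => Nat.le_mul_of_pos_right n hMpos) tendsto_id
    have hten1 : Tendsto (fun mm : ℕ => ∫ x, |L^[mm * M] u x - p 0 x| ∂m) atTop (𝓝 0) := by
      refine (hten0.comp hsubseq).congr fun mm => ?_
      simp only [Function.comp_apply]
      refine integral_congr_ae ?_
      filter_upwards [(hQ (mm * M)).2] with x hx
      simp only [hx, hpM mm]
    have hdiff_int : ∀ mm : ℕ, Integrable (fun x => L^[mm * M] u x - p 0 x) m :=
      fun mm => ((hU (mm * M)).1).sub (hpint 0)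
    have hzero : ∀ q : X → ℝ, Integrable q m → 0 ≤ᵐ[m] q →
        (∀ mm : ℕ, ∫ x, q x ∂m ≤ ∫ x, |L^[mm * M] u x - p 0 x| ∂m) → q =ᵐ[m] 0 := by
      intro q hqi hq0 hb
      have h0 : ∫ x, q x ∂m ≤ 0 := ge_of_tendsto' hten1 hb
      have h1 : ∫ x, q x ∂m = 0 := le_antisymm h0 (integral_nonneg_of_ae hq0)
      exact (integral_eq_zero_iff_of_nonneg_ae hq0 hqi).1 h1
    -- p 0 is nonnegative
    have hp0 : 0 ≤ᵐ[m] p 0 := by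
      have hq := hzero (fun x => max (-(p 0 x)) 0) ((hpint 0).neg.pos_part)
        (Filter.Eventually.of_forall fun x => le_max_right _ _) ?_
      · filter_upwards [hq] with x hx
        simp only [Pi.zero_apply] at hx ⊢
        linarith [le_max_left (-(p 0 x)) (0 : ℝ)]
      · intro mm
        refine integral_mono_ae ((hpint 0).neg.pos_part) ((hdiff_int mm).abs) ?_
        filter_upwards [(hU (mm * M)).2.1] with x hx
        simp only [Pi.zero_apply] at hx
        refine max_le ?_ (abs_nonneg _)
        linarith [le_abs_self (L^[mm * M] u x - p 0 x)]
    -- p 0 is dominated by g k₀ 1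
    have hple : p 0 ≤ᵐ[m] g k₀ 1 := by
      have hq := hzero (fun x => max (p 0 x - g k₀ 1 x) 0) (((hpint 0).sub hg1int).pos_part)
        (Filter.Eventually.of_forall fun x => le_max_right _ _) ?_
      · filter_upwards [hq] with x hx
        simp only [Pi.zero_apply] at hx
        linarith [le_max_left (p 0 x - g k₀ 1 x) (0 : ℝ)]
      · intro mm
        refine integral_mono_ae (((hpint 0).sub hg1int).pos_part) ((hdiff_int mm).abs) ?_
        filter_upwards [(hU (mm * M)).2.2.1] with x hx
        rw [hGidx mm] at hx
        refine max_le ?_ (abs_nonneg _)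
        linarith [neg_le_abs (L^[mm * M] u x - p 0 x)]
    -- p 0 vanishes off Aset j
    have hpoff : ∀ᵐ x ∂m, x ∉ Aset j → p 0 x = 0 := by
      have hq := hzero (((Aset j)ᶜ).indicator fun x => |p 0 x|)
        ((hpint 0).abs.indicator hAj.compl)
        (Filter.Eventually.of_forall fun x => Set.indicator_apply_nonneg fun _ => abs_nonneg _) ?_
      · filter_upwards [hq] with x hx hnot
        simp only [Pi.zero_apply] at hx
        rw [Set.indicator_of_mem (by exact hnot : x ∈ (Aset j)ᶜ)] at hx
        exact abs_eq_zero.mp hx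
      · intro mm
        refine integral_mono_ae ((hpint 0).abs.indicator hAj.compl) ((hdiff_int mm).abs) ?_
        filter_upwards [(hU (mm * M)).2.2.2.1] with x hx
        rw [hAidx mm] at hx
        by_cases hxA : x ∈ Aset j
        · rw [Set.indicator_of_notMem (by simpa using hxA)]
          exact abs_nonneg _
        · rw [Set.indicator_of_mem (by exact hxA : x ∈ (Aset j)ᶜ), hx hxA]
          simp
    -- the integral of p 0
    have hpI : ∫ x, p 0 x ∂m = ∫ x, u x ∂m := by
      have hb : ∀ mm : ℕ, |∫ x, p 0 x ∂m - ∫ x, u x ∂m|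
          ≤ ∫ x, |L^[mm * M] u x - p 0 x| ∂m := by
        intro mm
        have h1 : ∫ x, (L^[mm * M] u x - p 0 x) ∂m = ∫ x, u x ∂m - ∫ x, p 0 x ∂m := by
          rw [integral_sub (hU (mm * M)).1 (hpint 0), (hU (mm * M)).2.2.2.2]
        calc |∫ x, p 0 x ∂m - ∫ x, u x ∂m|
            = |∫ x, (L^[mm * M] u x - p 0 x) ∂m| := by rw [h1, abs_sub_comm]
          _ ≤ ∫ x, |L^[mm * M] u x - p 0 x| ∂m := by
              simpa [Real.norm_eq_abs] using
                norm_integral_le_integral_norm (μ := m) (fun x => L^[mm * M] u x - p 0 x)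
      have h0 : |∫ x, p 0 x ∂m - ∫ x, u x ∂m| ≤ 0 := ge_of_tendsto' hten1 hb
      have := abs_nonneg (∫ x, p 0 x ∂m - ∫ x, u x ∂m)
      have h1 : |∫ x, p 0 x ∂m - ∫ x, u x ∂m| = 0 := le_antisymm h0 this
      have := abs_eq_zero.mp h1
      linarith
    -- all foreign coefficients vanish
    have hαz : ∀ k ∈ Finset.Icc 1 s, ∀ l ∈ Finset.Icc 1 (r k), ((k, l) ≠ (k₀, 1)) →
        Λ k l (hu.toL1 u) = 0 := by
      intro k hk l hl hne
      by_contra hα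
      have hne' : ((k₀ : ℕ), (1 : ℕ)) ≠ (k, l) := fun h => hne h.symm
      have horthg := hgorth k₀ hk₀ 1 h1mem k hk l hl hne'
      have horth_all : ∀ᵐ x ∂m, ∀ k' l' : ℕ, k' ∈ Finset.Icc 1 s →
          l' ∈ Finset.Icc 1 (r k') → ((k', l') ≠ (k, l)) → g k' l' x * g k l x = 0 := by
        refine ae_all_iff.2 fun k' => ae_all_iff.2 fun l' => ?_
        by_cases hcond : k' ∈ Finset.Icc 1 s ∧ l' ∈ Finset.Icc 1 (r k') ∧ ((k', l') ≠ (k, l))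
        · filter_upwards [hgorth k' hcond.1 l' hcond.2.1 k hk l hl hcond.2.2] with x hx
          intro _ _ _
          simpa using hx
        · filter_upwards with x h1 h2 h3
          exact absurd ⟨h1, h2, h3⟩ hcond
      have hprod0 : (fun x => p 0 x * g k l x) =ᵐ[m] 0 := by
        filter_upwards [hp0, hple, horthg, (hgdens k hk l hl).2.2.1] with x h1 h2 h3 h4
        simp only [Pi.zero_apply] at h1 h3 h4 ⊢
        have hb1 : p 0 x * g k l x ≤ g k₀ 1 x * g k l x := mul_le_mul_of_nonneg_right h2 h4
        have hb2 : (0 : ℝ) ≤ p 0 x * g k l x := mul_nonneg h1 h4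
        linarith
      have hexp : (fun x => p 0 x * g k l x)
          =ᵐ[m] fun x => Λ k l (hu.toL1 u) * (g k l x * g k l x) := by
        filter_upwards [horth_all] with x hx
        show p 0 x * g k l x = _
        rw [hpdef]
        simp only [Function.iterate_zero_apply]
        rw [Finset.sum_mul]
        rw [Finset.sum_eq_single_of_mem k hk (fun k' hk' hkne => by
          rw [Finset.sum_mul]
          refine Finset.sum_eq_zero fun l' hl' => ?_
          rw [mul_assoc, hx k' l' hk' hl' (by simp [Prod.ext_iff, hkne]), mul_zero])]
        rw [Finset.sum_mul]
        rw [Finset.sum_eq_single_of_mem l hl (fun l' hl' hlne => by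
          rw [mul_assoc, hx k l' hk hl' (by simp [Prod.ext_iff, hlne]), mul_zero])]
        rw [mul_assoc]
      have hgz : g k l =ᵐ[m] 0 := by
        have h0 : (fun x => Λ k l (hu.toL1 u) * (g k l x * g k l x)) =ᵐ[m] 0 :=
          hexp.symm.trans hprod0
        filter_upwards [h0] with x hx
        simp only [Pi.zero_apply] at hx ⊢
        rcases mul_eq_zero.mp hx with h | h
        · exact absurd h hα
        · exact mul_self_eq_zero.mp h
      have hI := (hgdens k hk l hl).2.2.2
      rw [integral_congr_ae hgz] at hI
      simp at hI
    -- collapse p 0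
    have hcoll : ∀ x, p 0 x = Λ k₀ 1 (hu.toL1 u) * g k₀ 1 x := by
      intro x
      rw [hpdef]
      simp only [Function.iterate_zero_apply]
      rw [Finset.sum_eq_single_of_mem k₀ hk₀ (fun k hk hkne =>
        Finset.sum_eq_zero fun l hl => by
          rw [hαz k hk l hl (by simp [Prod.ext_iff, hkne]), zero_mul])]
      rw [Finset.sum_eq_single_of_mem 1 h1mem (fun l hl hlne => by
        rw [hαz k₀ hk₀ l hl (by simp [Prod.ext_iff, hlne]), zero_mul])]
    have hα0 : Λ k₀ 1 (hu.toL1 u) = ∫ x, u x ∂m := by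
      have h1 : ∫ x, p 0 x ∂m = Λ k₀ 1 (hu.toL1 u) := by
        simp only [hcoll]
        rw [integral_const_mul, hg1I, mul_one]
      rw [← h1, hpI]
    have hcu : ∫ x, u x ∂m = ∫ x in Aset j, g k₀ 1 x ∂m := integral_indicator hAj
    filter_upwards [hpoff] with x hx hnot
    have h2 := hx hnot
    rw [hcoll x, hα0, hcu] at h2
    rcases mul_eq_zero.mp h2 with h | h
    · exact absurd h hcne
    · exact h
  -- ===== nonnegativity a.e. facts =====
  have hgknn : ∀ᵐ x ∂m, ∀ l, l ∈ Finset.Icc 1 (r k₀) → 0 ≤ g k₀ l x := by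
    refine ae_all_iff.2 fun l => ?_
    by_cases hl : l ∈ Finset.Icc 1 (r k₀)
    · filter_upwards [(hgdens k₀ hk₀ l hl).2.2.1] with x hx _
      simpa using hx
    · filter_upwards with x h1
      exact absurd h1 hl
  have hgpnn : ∀ᵐ x ∂m, ∀ jj, jj ∈ Finset.Icc 1 (r' i) → 0 ≤ g' i jj x := by
    refine ae_all_iff.2 fun jj => ?_
    by_cases hl : jj ∈ Finset.Icc 1 (r' i)
    · filter_upwards [(hdens i hi jj hl).2.2.1] with x hx _
      simpa using hx
    · filter_upwards with x h1
      exact absurd h1 hl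
  have hsupp' : ∀ᵐ x ∂m, x ∉ ({x | 0 < avgDens (r k₀) (g k₀) x} \
      {x | 0 < avgDens (r' i) (g' i) x}) := measure_eq_zero_iff_ae_notMem.1 hsupp
  have hoffall : ∀ᵐ x ∂m, (∀ jj, jj ∈ Finset.Icc 1 (r' i) → x ∉ Aset jj) →
      g k₀ 1 x = 0 := by
    filter_upwards [hgknn, hgpnn, hsupp', hg1nn] with x h1 h2 h3 h4 hnotin
    simp only [Pi.zero_apply] at h4
    by_contra hne
    have hpos : 0 < g k₀ 1 x := lt_of_le_of_ne h4 (Ne.symm hne)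
    have hS : 0 < avgDens (r k₀) (g k₀) x := by
      have hsum : 0 < ∑ l ∈ Finset.Icc 1 (r k₀), g k₀ l x :=
        Finset.sum_pos' (fun l hl => h1 l hl) ⟨1, h1mem, hpos⟩
      have hrc : (0 : ℝ) < ((r k₀ : ℕ) : ℝ)⁻¹ := by
        have : (0 : ℝ) < (r k₀ : ℝ) := by exact_mod_cast hrr
        positivity
      exact mul_pos hrc hsum
    have hS' : x ∈ {x | 0 < avgDens (r' i) (g' i) x} := by
      by_contra hns'
      exact h3 ⟨hS, hns'⟩
    have hsum' : 0 < ∑ jj ∈ Finset.Icc 1 (r' i), g' i jj x := by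
      have hx' : 0 < ((r' i : ℕ) : ℝ)⁻¹ * ∑ jj ∈ Finset.Icc 1 (r' i), g' i jj x := hS'
      by_contra hle
      push_neg at hle
      have hrc : (0 : ℝ) ≤ ((r' i : ℕ) : ℝ)⁻¹ := by positivity
      nlinarith
    have hzero : ∑ jj ∈ Finset.Icc 1 (r' i), g' i jj x = 0 :=
      Finset.sum_eq_zero fun jj hjj =>
        le_antisymm (not_lt.mp (hnotin jj hjj)) (h2 jj hjj)
    linarith
  -- ===== existence of a charged block =====
  have hexists : ∃ j, 1 ≤ j ∧ j ≤ r' i ∧ ∫ x in Aset j, g k₀ 1 x ∂m ≠ 0 := by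
    by_contra h
    push_neg at h
    have hvan : ∀ᵐ x ∂m, ∀ jj, jj ∈ Finset.Icc 1 (r' i) → x ∈ Aset jj →
        g k₀ 1 x = 0 := by
      refine ae_all_iff.2 fun jj => ?_
      by_cases hjj : jj ∈ Finset.Icc 1 (r' i)
      · obtain ⟨hj1, hj2⟩ := Finset.mem_Icc.mp hjj
        have hz := h jj hj1 hj2
        have hres : g k₀ 1 =ᵐ[m.restrict (Aset jj)] 0 :=
          (integral_eq_zero_iff_of_nonneg_ae (ae_restrict_of_ae hg1nn)
            hg1int.integrableOn).1 hz
        rw [EventuallyEq, ae_restrict_iff' (hAmeas jj hj1 hj2)] at hres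
        filter_upwards [hres] with x hx _ hmem
        exact hx hmem
      · filter_upwards with x hjm
        exact absurd hjm hjj
    have hg1z : g k₀ 1 =ᵐ[m] 0 := by
      filter_upwards [hvan, hoffall] with x h1 h2
      by_cases hc : ∀ jj, jj ∈ Finset.Icc 1 (r' i) → x ∉ Aset jj
      · simpa using h2 hc
      · push_neg at hc
        obtain ⟨jj, hjj, hmem⟩ := hc
        simpa using h1 jj hjj hmem
    rw [integral_congr_ae hg1z] at hg1I
    simp at hg1I
  obtain ⟨jstar, hjs1, hjs2, hjsne⟩ := hexists
  have hstar := key jstar hjs1 hjs2 hjsne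
  -- ===== phase 2 : follow the full density around the cycle =====
  have hU2 : ∀ n, Integrable (L^[n] (g k₀ 1)) m ∧ 0 ≤ᵐ[m] L^[n] (g k₀ 1) ∧
      L^[n] (g k₀ 1) ≤ᵐ[m] g k₀ ((nxt (r k₀))^[n] 1) ∧
      (∀ᵐ x ∂m, x ∉ Aset ((nxt (r' i))^[n] jstar) → L^[n] (g k₀ 1) x = 0) ∧
      ∫ x, L^[n] (g k₀ 1) x ∂m = ∫ x, g k₀ 1 x ∂m :=
    fun n => evolve (G := fun n => g k₀ ((nxt (r k₀))^[n] 1))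
      (A := fun n => Aset ((nxt (r' i))^[n] jstar)) hL hT hGGint hGGcyc
      (hAAmeas jstar hjs1 hjs2) (hAAcyc jstar hjs1 hjs2) hg1int hg1nn
      (Filter.Eventually.of_forall fun x => le_rfl) hstar n
  have heq2 : L^[r k₀] (g k₀ 1) =ᵐ[m] g k₀ 1 := by
    have h1 := evolve_eq (G := fun n => g k₀ ((nxt (r k₀))^[n] 1)) hL hGGint hGGcyc
      (fun n => (hU2 n).1) (r k₀)
    rwa [nxt_iter_of_dvd (r k₀) hrr le_rfl hrr dvd_rfl] at h1
  have hoff2 := (hU2 (r k₀)).2.2.2.1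
  by_cases hjj : (nxt (r' i))^[r k₀] jstar = jstar
  · exact nxt_iter_fixed (r' i) hR hjs1 hjs2 hjj
  · exfalso
    obtain ⟨hj21, hj22⟩ := nxt_mem (r' i) hR hjs1 hjs2 (r k₀)
    have hjsmem : jstar ∈ Finset.Icc 1 (r' i) := Finset.mem_Icc.mpr ⟨hjs1, hjs2⟩
    have hj2mem : (nxt (r' i))^[r k₀] jstar ∈ Finset.Icc 1 (r' i) :=
      Finset.mem_Icc.mpr ⟨hj21, hj22⟩
    have hneq : ((i : ℕ), jstar) ≠ (i, (nxt (r' i))^[r k₀] jstar) := by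
      intro h
      exact hjj (congrArg Prod.snd h).symm
    have horthA := horth i hi jstar hjsmem i hi _ hj2mem hneq
    have hint0 : m (Aset jstar ∩ Aset ((nxt (r' i))^[r k₀] jstar)) = 0 := by
      have hsub : Aset jstar ∩ Aset ((nxt (r' i))^[r k₀] jstar) ⊆
          {x | ¬ (g' i jstar x * g' i ((nxt (r' i))^[r k₀] jstar) x = 0)} := by
        rintro x ⟨hx1, hx2⟩
        exact ne_of_gt (mul_pos hx1 hx2)
      refine measure_mono_null hsub ?_
      have := horthA
      rw [EventuallyEq, ae_iff] at this
      simpa using this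
    have hnm := measure_eq_zero_iff_ae_notMem.1 hint0
    have hg1z : g k₀ 1 =ᵐ[m] 0 := by
      filter_upwards [hnm, hstar, heq2, hoff2] with x hx h1 h2 h3
      simp only [Pi.zero_apply]
      by_cases hxA : x ∈ Aset jstar
      · have hxA2 : x ∉ Aset ((nxt (r' i))^[r k₀] jstar) := fun hmem => hx ⟨hxA, hmem⟩
        rw [← h2]
        exact h3 hxA2
      · exact h1 hxA
    rw [integral_congr_ae hg1z] at hg1I
    simp at hg1I
end
end

section
/- In the skew product setting, suppose the Perron–Frobenius operator 𝓛_S is asymptotically periodic with periodic probability densities ĝ_{i,j} (1 ≤ i ≤ ŝ, 1 ≤ j ≤ r̂(i)) which, as elements of L¹(m×P), depend only on the x-variable (i.e. ĝ_{i,j} ∈ L¹(m)). If the set {y ∈ Y : T_y x = x for all x ∈ X} is measurable and has positive η-measure, then r̂(i) = 1 for every i ∈ {1,…,ŝ}. -/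
open MeasureTheory Filter Topology

noncomputable section

/-- **Theorem 3.2.** In the skew product setting, suppose `𝓛_S` is
asymptotically periodic with periodic probability densities `ĝ_{i,j}`
depending only on the `x`-variable.  If the set of parameters `y` for which
`T_y` is the identity map has positive `η`-measure, then `r̂ i = 1` for every
`i ∈ {1,…,ŝ}`. -/
theorem stmt_2 {X Y : Type*} [MeasurableSpace X] [MeasurableSpace Y]
    (m : Measure X) [IsProbabilityMeasure m]
    (η : Measure Y) [IsProbabilityMeasure η]
    (P : Measure (ℕ → Y)) [IsProbabilityMeasure P]
    (hP : ∀ (n : ℕ) (A : ℕ → Set Y), (∀ i, MeasurableSet (A i)) →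
      P {ω : ℕ → Y | ∀ i < n, ω i ∈ A i} = ∏ i ∈ Finset.range n, η (A i))
    (T : Y → X → X) (hTmeas : Measurable fun p : X × Y => T p.2 p.1)
    (hTns : ∀ y : Y, ∀ A : Set X, MeasurableSet A → m A = 0 → m (T y ⁻¹' A) = 0)
    (LS : (X × (ℕ → Y) → ℝ) → X × (ℕ → Y) → ℝ)
    (hLS : IsPF (m.prod P)
      (fun p : X × (ℕ → Y) => (T (p.2 0) p.1, fun n => p.2 (n + 1))) LS)
    (s' : ℕ) (r' : ℕ → ℕ) (g' : ℕ → ℕ → X → ℝ)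
    (Λ : ℕ → ℕ → ((X × (ℕ → Y)) →₁[m.prod P] ℝ) →L[ℝ] ℝ)
    (hap : AsympPeriodic (m.prod P) LS s' r' (fun i j p => g' i j p.1) Λ)
    (hIdmeas : MeasurableSet {y : Y | ∀ x, T y x = x})
    (hIdpos : 0 < η {y : Y | ∀ x, T y x = x}) :
    ∀ i ∈ Finset.Icc 1 s', r' i = 1 := by
  obtain ⟨hs, hr, hprops, horth, hcyc, -⟩ := hap
  intro i hi
  by_contra hne
  have hri : 1 ≤ r' i := hr i hi
  have hr2 : 2 ≤ r' i := by omega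
  have h1m : (1 : ℕ) ∈ Finset.Icc 1 (r' i) := by simp [Finset.mem_Icc]; omega
  have h2m : (2 : ℕ) ∈ Finset.Icc 1 (r' i) := by simp [Finset.mem_Icc]; omega
  set E : Set Y := {y | ∀ x, T y x = x} with hE
  obtain ⟨y₀, hy₀⟩ : E.Nonempty := nonempty_of_measure_ne_zero hIdpos.ne'
  obtain ⟨hmeas1, hint1, hnn1, hI1⟩ := hprops i hi 1 h1m
  obtain ⟨hmeas2, hint2, hnn2, hI2⟩ := hprops i hi 2 h2m
  have horth12 := horth i hi 1 h1m i hi 2 h2m (by simp)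
  have hcyc12 : LS (fun p : X × (ℕ → Y) => g' i 1 p.1)
      =ᵐ[m.prod P] (fun p : X × (ℕ → Y) => g' i 2 p.1) := by
    have := (hcyc i hi).1 1 (by simp [Finset.mem_Icc]; omega)
    simpa using this
  -- measurability of g' i 1 as a function of x
  have hg1meas : Measurable (g' i 1) := by
    have hc : Measurable (fun x : X => ((x, fun _ => y₀) : X × (ℕ → Y))) :=
      measurable_id.prodMk measurable_const
    exact hmeas1.comp hc
  set B : Set X := {x | 0 < g' i 1 x} with hBdef
  have hB : MeasurableSet B := measurableSet_lt measurable_const hg1meas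
  set C : Set (ℕ → Y) := (fun ω : ℕ → Y => ω 0) ⁻¹' E with hCdef
  have hC : MeasurableSet C := measurable_pi_apply 0 hIdmeas
  have hA : MeasurableSet (B ×ˢ C) := hB.prod hC
  obtain ⟨hLint, hLeq⟩ := hLS (fun p => g' i 1 p.1) hint1
  have key := hLeq (B ×ˢ C) hA
  -- LHS is zero
  have hL0 : ∫ p in B ×ˢ C, LS (fun p : X × (ℕ → Y) => g' i 1 p.1) p ∂(m.prod P) = 0 := by
    have e1 : ∫ p in B ×ˢ C, LS (fun p : X × (ℕ → Y) => g' i 1 p.1) p ∂(m.prod P)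
        = ∫ p in B ×ˢ C, g' i 2 p.1 ∂(m.prod P) :=
      integral_congr_ae (ae_restrict_of_ae hcyc12)
    have e2 : (fun p : X × (ℕ → Y) => g' i 2 p.1)
        =ᵐ[(m.prod P).restrict (B ×ˢ C)] 0 := by
      filter_upwards [ae_restrict_of_ae horth12, ae_restrict_mem hA] with p hp hpA
      have hx : 0 < g' i 1 p.1 := hpA.1
      have := mul_eq_zero.1 hp
      rcases this with h | h
      · exact absurd h (ne_of_gt hx)
      · exact h
    rw [e1, integral_congr_ae e2]
    simp
  -- m B ≠ 0
  have hmB : m B ≠ 0 := by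
    intro h0
    have hprod0 : (m.prod P) (B ×ˢ (Set.univ : Set (ℕ → Y))) = 0 := by
      rw [Measure.prod_prod, h0, zero_mul]
    have hnm : ∀ᵐ p ∂(m.prod P), p ∉ B ×ˢ (Set.univ : Set (ℕ → Y)) :=
      (measure_eq_zero_iff_ae_notMem).1 hprod0
    have hz : (fun p : X × (ℕ → Y) => g' i 1 p.1) =ᵐ[m.prod P] 0 := by
      filter_upwards [hnm, hnn1] with p hp hnp
      have : p.1 ∉ B := by
        intro hb; exact hp ⟨hb, Set.mem_univ _⟩
      have : ¬ 0 < g' i 1 p.1 := this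
      have h1 : g' i 1 p.1 ≤ 0 := le_of_not_gt this
      exact le_antisymm h1 hnp
    rw [integral_congr_ae hz] at hI1
    simp at hI1
  -- the witness set W
  set W : Set (X × (ℕ → Y)) := B ×ˢ {ω : ℕ → Y | ω 0 ∈ E ∧ ω 1 ∈ E} with hWdef
  have hPC : P {ω : ℕ → Y | ω 0 ∈ E ∧ ω 1 ∈ E} = η E * η E := by
    have hset : {ω : ℕ → Y | ∀ j < 2, ω j ∈ E} = {ω : ℕ → Y | ω 0 ∈ E ∧ ω 1 ∈ E} := by
      ext ω
      constructor
      · intro h; exact ⟨h 0 (by omega), h 1 (by omega)⟩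
      · rintro ⟨h0, h1⟩ j hj; interval_cases j <;> assumption
    rw [← hset, hP 2 (fun _ => E) (fun _ => hIdmeas)]
    simp [Finset.prod_range_succ, sq]
  have hWval : (m.prod P) W = m B * (η E * η E) := by
    rw [hWdef, Measure.prod_prod, hPC]
  have hWpos : 0 < (m.prod P) W := by
    rw [hWval]
    exact pos_iff_ne_zero.2 (mul_ne_zero hmB (mul_ne_zero hIdpos.ne' hIdpos.ne'))
  have hWsub : W ⊆ Function.support (fun p : X × (ℕ → Y) => g' i 1 p.1) ∩
      ((fun p : X × (ℕ → Y) => (T (p.2 0) p.1, fun n => p.2 (n + 1))) ⁻¹' (B ×ˢ C)) := by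
    rintro ⟨x, ω⟩ ⟨hxB, h0, h1⟩
    refine ⟨ne_of_gt hxB, ?_, ?_⟩
    · show 0 < g' i 1 (T (ω 0) x)
      rw [h0 x]; exact hxB
    · show (fun n => ω (n + 1)) 0 ∈ E
      exact h1
  have hRpos : 0 < ∫ p in
      (fun p : X × (ℕ → Y) => (T (p.2 0) p.1, fun n => p.2 (n + 1))) ⁻¹' (B ×ˢ C),
      g' i 1 p.1 ∂(m.prod P) := by
    rw [setIntegral_pos_iff_support_of_nonneg_ae (ae_restrict_of_ae hnn1) hint1.integrableOn]
    exact lt_of_lt_of_le hWpos (measure_mono hWsub)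
  rw [hL0] at key
  exact absurd key.symm hRpos.ne'
end
end

section
/- In the skew product setting, suppose the Perron–Frobenius operator 𝓛_S is asymptotically periodic with periodic probability densities ĝ_{i,j} (1 ≤ i ≤ ŝ, 1 ≤ j ≤ r̂(i)) which, as elements of L¹(m×P), depend only on the x-variable (i.e. ĝ_{i,j} ∈ L¹(m)). Then there exists a measurable set Y₀ ⊆ Y with η(Y₀) = 1 such that for every y ∈ Y₀ and every i ∈ {1,…,ŝ}: m({ĝ_{i,j} > 0} \ T_y⁻¹{ĝ_{i,j+1} > 0}) = 0 for 1 ≤ j ≤ r̂(i)−1, and m({ĝ_{i,r̂(i)} > 0} \ T_y⁻¹{ĝ_{i,1} > 0}) = 0. -/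
open MeasureTheory Filter Topology

noncomputable section

lemma key_lemma {X Y : Type*} [MeasurableSpace X] [MeasurableSpace Y]
    (m : Measure X) [IsProbabilityMeasure m]
    (η : Measure Y) [IsProbabilityMeasure η]
    (P : Measure (ℕ → Y)) [IsProbabilityMeasure P]
    (hP : ∀ (n : ℕ) (A : ℕ → Set Y), (∀ i, MeasurableSet (A i)) →
      P {ω : ℕ → Y | ∀ i < n, ω i ∈ A i} = ∏ i ∈ Finset.range n, η (A i))
    (T : Y → X → X) (hTmeas : Measurable fun p : X × Y => T p.2 p.1)
    (LS : (X × (ℕ → Y) → ℝ) → X × (ℕ → Y) → ℝ)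
    (hLS : IsPF (m.prod P)
      (fun p : X × (ℕ → Y) => (T (p.2 0) p.1, fun n => p.2 (n + 1))) LS)
    (g1 g2 : X → ℝ) (h1m : Measurable g1) (h2m : Measurable g2)
    (h1i : Integrable (fun p : X × (ℕ → Y) => g1 p.1) (m.prod P))
    (h1n : 0 ≤ᵐ[m.prod P] fun p : X × (ℕ → Y) => g1 p.1)
    (h2n : 0 ≤ᵐ[m.prod P] fun p : X × (ℕ → Y) => g2 p.1)
    (hL : LS (fun p => g1 p.1) =ᵐ[m.prod P] fun p : X × (ℕ → Y) => g2 p.1) :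
    ∀ᵐ y ∂η, m ({x | 0 < g1 x} \ T y ⁻¹' {x | 0 < g2 x}) = 0 := by
  set B : Set X := {x | 0 < g2 x}ᶜ with hBdef
  have hB : MeasurableSet B := (measurableSet_lt measurable_const h2m).compl
  set C : Set (X × (ℕ → Y)) := B ×ˢ (Set.univ : Set (ℕ → Y)) with hCdef
  have hC : MeasurableSet C := hB.prod MeasurableSet.univ
  set S : X × (ℕ → Y) → X × (ℕ → Y) :=
    fun p => (T (p.2 0) p.1, fun n => p.2 (n + 1)) with hSdef
  have hSmeas : Measurable S := by
    refine Measurable.prod ?_ ?_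
    · exact hTmeas.comp (measurable_fst.prodMk ((measurable_pi_apply 0).comp measurable_snd))
    · exact measurable_pi_lambda _ fun n => (measurable_pi_apply (n + 1)).comp measurable_snd
  have hSC : MeasurableSet (S ⁻¹' C) := hSmeas hC
  -- Step A
  have hA : ∫ p in C, g2 p.1 ∂(m.prod P) = 0 := by
    have hz : (fun p : X × (ℕ → Y) => g2 p.1) =ᵐ[(m.prod P).restrict C] 0 := by
      filter_upwards [ae_restrict_of_ae h2n, ae_restrict_mem hC] with p hp hpC
      exact le_antisymm (not_lt.mp hpC.1) hp
    exact integral_eq_zero_of_ae hz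
  -- Step B
  obtain ⟨hLint, hLset⟩ := hLS _ h1i
  have hA' : ∫ p in S ⁻¹' C, g1 p.1 ∂(m.prod P) = 0 := by
    calc ∫ p in S ⁻¹' C, g1 p.1 ∂(m.prod P)
        = ∫ p in C, LS (fun p => g1 p.1) p ∂(m.prod P) := (hLset C hC).symm
      _ = ∫ p in C, g2 p.1 ∂(m.prod P) := integral_congr_ae (ae_restrict_of_ae hL)
      _ = 0 := hA
  -- Step C
  have hzero : (fun p : X × (ℕ → Y) => g1 p.1) =ᵐ[(m.prod P).restrict (S ⁻¹' C)] 0 :=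
    (integral_eq_zero_iff_of_nonneg_ae (ae_restrict_of_ae h1n) h1i.restrict).mp hA'
  set E : Set (X × (ℕ → Y)) := {p | 0 < g1 p.1} ∩ S ⁻¹' C with hEdef
  have hEmeas : MeasurableSet E :=
    (measurableSet_lt measurable_const (h1m.comp measurable_fst)).inter hSC
  have hE0 : (m.prod P) E = 0 := by
    have h : (m.prod P).restrict (S ⁻¹' C) {p | g1 p.1 ≠ 0} = 0 := by
      simpa [Filter.EventuallyEq, ae_iff] using hzero
    rw [Measure.restrict_apply' hSC] at h
    refine measure_mono_null ?_ h
    intro p hp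
    exact ⟨ne_of_gt hp.1, hp.2⟩
  -- Step D
  set F : Set (Y × X) := {q | 0 < g1 q.2 ∧ T q.1 q.2 ∈ B} with hFdef
  have hFmeas : MeasurableSet F := by
    have h2' : Measurable fun q : Y × X => T q.1 q.2 := hTmeas.comp measurable_swap
    exact (measurableSet_lt measurable_const (h1m.comp measurable_snd)).inter (h2' hB)
  have hFE : (η.prod m) F = (m.prod P) E := by
    rw [Measure.prod_apply_symm hFmeas, Measure.prod_apply hEmeas]
    refine lintegral_congr fun x => ?_
    by_cases hx : 0 < g1 x
    · have hAx : MeasurableSet {y : Y | T y x ∈ B} :=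
        (hTmeas.comp measurable_prodMk_left) hB
      have hη := hP 1 (fun _ => {y : Y | T y x ∈ B}) (fun _ => hAx)
      rw [Finset.prod_range_one] at hη
      have e1 : ((fun y : Y => (y, x)) ⁻¹' F) = {y : Y | T y x ∈ B} := by
        ext y; simp [hFdef, hx]
      have e2 : (Prod.mk x ⁻¹' E) =
          {ω : ℕ → Y | ∀ i < 1, ω i ∈ {y : Y | T y x ∈ B}} := by
        ext ω
        simp [hEdef, hCdef, hSdef, hx, Nat.lt_one_iff]
      rw [e1, e2, hη]
    · have e1 : ((fun y : Y => (y, x)) ⁻¹' F) = ∅ := by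
        ext y; simp [hFdef, hx]
      have e2 : (Prod.mk x ⁻¹' E) = ∅ := by
        ext ω; simp [hEdef, hx]
      rw [e1, e2]
      simp
  have hF0 : (η.prod m) F = 0 := hFE.trans hE0
  filter_upwards [Measure.measure_ae_null_of_prod_null hF0] with y hy
  have e3 : (Prod.mk y ⁻¹' F) = {x | 0 < g1 x} \ T y ⁻¹' {x | 0 < g2 x} := by
    ext x
    simp [hFdef, hBdef, Set.mem_diff]
  rw [← e3]
  simpa using hy


/-- **Proposition 3.1.** In the skew product setting, suppose `𝓛_S` is
asymptotically periodic with periodic probability densities `ĝ_{i,j}`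
depending only on the `x`-variable.  Then there is a measurable `Y₀ ⊆ Y` with
`η(Y₀) = 1` such that for every `y ∈ Y₀` and every `i`, the supports
`{ĝ_{i,j} > 0}` are cycled by `T_y`:
`m({ĝ_{i,j} > 0} \ T_y⁻¹{ĝ_{i,j+1} > 0}) = 0` for `1 ≤ j ≤ r̂ i − 1`, and
`m({ĝ_{i,r̂ i} > 0} \ T_y⁻¹{ĝ_{i,1} > 0}) = 0`. -/
theorem stmt_3 {X Y : Type*} [MeasurableSpace X] [MeasurableSpace Y]
    (m : Measure X) [IsProbabilityMeasure m]
    (η : Measure Y) [IsProbabilityMeasure η]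
    (P : Measure (ℕ → Y)) [IsProbabilityMeasure P]
    (hP : ∀ (n : ℕ) (A : ℕ → Set Y), (∀ i, MeasurableSet (A i)) →
      P {ω : ℕ → Y | ∀ i < n, ω i ∈ A i} = ∏ i ∈ Finset.range n, η (A i))
    (T : Y → X → X) (hTmeas : Measurable fun p : X × Y => T p.2 p.1)
    (hTns : ∀ y : Y, ∀ A : Set X, MeasurableSet A → m A = 0 → m (T y ⁻¹' A) = 0)
    (LS : (X × (ℕ → Y) → ℝ) → X × (ℕ → Y) → ℝ)
    (hLS : IsPF (m.prod P)
      (fun p : X × (ℕ → Y) => (T (p.2 0) p.1, fun n => p.2 (n + 1))) LS)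
    (s' : ℕ) (r' : ℕ → ℕ) (g' : ℕ → ℕ → X → ℝ)
    (Λ : ℕ → ℕ → ((X × (ℕ → Y)) →₁[m.prod P] ℝ) →L[ℝ] ℝ)
    (hap : AsympPeriodic (m.prod P) LS s' r' (fun i j p => g' i j p.1) Λ) :
    ∃ Y₀ : Set Y, MeasurableSet Y₀ ∧ η Y₀ = 1 ∧
      ∀ y ∈ Y₀, ∀ i ∈ Finset.Icc 1 s',
        (∀ j ∈ Finset.Icc 1 (r' i - 1),
          m ({x | 0 < g' i j x} \ T y ⁻¹' {x | 0 < g' i (j + 1) x}) = 0) ∧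
          m ({x | 0 < g' i (r' i) x} \ T y ⁻¹' {x | 0 < g' i 1 x}) = 0 := by
    classical
  obtain ⟨hs1, hr, hdens, -, hcyc, -⟩ := hap
  have hne : Nonempty (ℕ → Y) := Measure.nonempty_of_neZero P
  obtain ⟨ω0⟩ := hne
  have hmeasg : ∀ i ∈ Finset.Icc 1 s', ∀ j ∈ Finset.Icc 1 (r' i), Measurable (g' i j) := by
    intro i hi j hj
    exact (hdens i hi j hj).1.comp (measurable_prodMk_right (y := ω0))
  have hae : ∀ᵐ y ∂η, ∀ i ∈ Finset.Icc 1 s',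
      ((∀ j ∈ Finset.Icc 1 (r' i - 1),
        m ({x | 0 < g' i j x} \ T y ⁻¹' {x | 0 < g' i (j + 1) x}) = 0) ∧
        m ({x | 0 < g' i (r' i) x} \ T y ⁻¹' {x | 0 < g' i 1 x}) = 0) := by
    rw [Filter.eventually_all_finset]
    intro i hi
    have hri : 1 ≤ r' i := hr i hi
    have hkey : ∀ j ∈ Finset.Icc 1 (r' i), ∀ k ∈ Finset.Icc 1 (r' i),
        LS (fun p => g' i j p.1) =ᵐ[m.prod P] (fun p : X × (ℕ → Y) => g' i k p.1) →
        ∀ᵐ y ∂η, m ({x | 0 < g' i j x} \ T y ⁻¹' {x | 0 < g' i k x}) = 0 := by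
      intro j hj k hk hL
      obtain ⟨hjm, hji, hjn, -⟩ := hdens i hi j hj
      obtain ⟨hkm, hki, hkn, -⟩ := hdens i hi k hk
      exact key_lemma m η P hP T hTmeas LS hLS _ _ (hmeasg i hi j hj) (hmeasg i hi k hk)
        hji hjn hkn hL
    have hwrap := hkey (r' i) (by simp [hri]) 1 (by simp [hri]) (hcyc i hi).2
    have hmid : ∀ᵐ y ∂η, ∀ j ∈ Finset.Icc 1 (r' i - 1),
        m ({x | 0 < g' i j x} \ T y ⁻¹' {x | 0 < g' i (j + 1) x}) = 0 := by
      rw [Filter.eventually_all_finset]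
      intro j hj
      simp only [Finset.mem_Icc] at hj
      exact hkey j (by simp only [Finset.mem_Icc]; omega) (j + 1)
        (by simp only [Finset.mem_Icc]; omega)
        ((hcyc i hi).1 j (by simp only [Finset.mem_Icc]; omega))
    filter_upwards [hmid, hwrap] with y h1 h2
    exact ⟨h1, h2⟩
  set Q : Y → Prop := fun y => ∀ i ∈ Finset.Icc 1 s',
      ((∀ j ∈ Finset.Icc 1 (r' i - 1),
        m ({x | 0 < g' i j x} \ T y ⁻¹' {x | 0 < g' i (j + 1) x}) = 0) ∧
        m ({x | 0 < g' i (r' i) x} \ T y ⁻¹' {x | 0 < g' i 1 x}) = 0) with hQdef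
  have hN : η {y | ¬ Q y} = 0 := by
    exact ae_iff.mp hae
  refine ⟨(toMeasurable η {y | ¬ Q y})ᶜ, (measurableSet_toMeasurable η _).compl, ?_, ?_⟩
  · rw [measure_compl (measurableSet_toMeasurable η _) (measure_ne_top η _),
      measure_toMeasurable, hN, measure_univ]
    simp
  · intro y hy
    by_contra h
    exact hy (subset_toMeasurable η _ h)
end
end

section
/- In the skew product setting, let f, g ∈ L¹(m) be nonnegative functions on X (regarded as functions on X×Ω not depending on ω) such that (𝓛_S f)(x,ω) = g(x) for m×P-a.e. (x,ω). Then there exists a measurable set Y₀ ⊆ Y with η(Y₀) = 1 such that for every y ∈ Y₀, m({x ∈ X : f(x) > 0} \ T_y⁻¹{x ∈ X : g(x) > 0}) = 0. -/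
open MeasureTheory Filter Topology

noncomputable section

/-- **Proposition 2.9.** In the skew product setting (with `P` the infinite
product of copies of `η` and `S(x,ω) = (T_{ω₀} x, σω)`), if `f, g ∈ L¹(m)` are
nonnegative and `𝓛_S (f ∘ fst) = g ∘ fst` a.e., then there is a measurable set
`Y₀ ⊆ Y` with `η(Y₀) = 1` such that `m({f > 0} \ T_y⁻¹{g > 0}) = 0` for every
`y ∈ Y₀`. -/
theorem stmt_4 {X Y : Type*} [MeasurableSpace X] [MeasurableSpace Y]
    (m : Measure X) [IsProbabilityMeasure m]
    (η : Measure Y) [IsProbabilityMeasure η]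
    (P : Measure (ℕ → Y)) [IsProbabilityMeasure P]
    (hP : ∀ (n : ℕ) (A : ℕ → Set Y), (∀ i, MeasurableSet (A i)) →
      P {ω : ℕ → Y | ∀ i < n, ω i ∈ A i} = ∏ i ∈ Finset.range n, η (A i))
    (T : Y → X → X) (hTmeas : Measurable fun p : X × Y => T p.2 p.1)
    (hTns : ∀ y : Y, ∀ A : Set X, MeasurableSet A → m A = 0 → m (T y ⁻¹' A) = 0)
    (LS : (X × (ℕ → Y) → ℝ) → X × (ℕ → Y) → ℝ)
    (hLS : IsPF (m.prod P)
      (fun p : X × (ℕ → Y) => (T (p.2 0) p.1, fun n => p.2 (n + 1))) LS)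
    (f g : X → ℝ) (hfm : Measurable f) (hgm : Measurable g)
    (hfi : Integrable f m) (hgi : Integrable g m) (hf0 : 0 ≤ f) (hg0 : 0 ≤ g)
    (heq : LS (fun p => f p.1) =ᵐ[m.prod P] fun p => g p.1) :
    ∃ Y₀ : Set Y, MeasurableSet Y₀ ∧ η Y₀ = 1 ∧
      ∀ y ∈ Y₀, m ({x | 0 < f x} \ T y ⁻¹' {x | 0 < g x}) = 0 := by

  classical
  set S : X × (ℕ → Y) → X × (ℕ → Y) :=
    fun p => (T (p.2 0) p.1, fun n => p.2 (n + 1)) with hSdef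
  have hSmeas : Measurable S := by
    apply Measurable.prod
    · exact hTmeas.comp (measurable_fst.prodMk ((measurable_pi_apply 0).comp measurable_snd))
    · exact measurable_pi_lambda _ fun n => (measurable_pi_apply (n + 1)).comp measurable_snd
  -- f ∘ fst is integrable on the product
  have hmapfst : (m.prod P).map Prod.fst = m := by
    rw [Measure.map_fst_prod]; simp
  have hfi' : Integrable (fun p : X × (ℕ → Y) => f p.1) (m.prod P) := by
    have h := (integrable_map_measure (f := Prod.fst) (μ := m.prod P) (g := f)
      (by rw [hmapfst]; exact hfm.aestronglyMeasurable)
      measurable_fst.aemeasurable).mp (by rw [hmapfst]; exact hfi)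
    exact h
  obtain ⟨hLSi, hLSint⟩ := hLS _ hfi'
  set E : Set (X × (ℕ → Y)) := {p | g p.1 ≤ 0} with hEdef
  have hE : MeasurableSet E := measurableSet_le (hgm.comp measurable_fst) measurable_const
  have h1 : ∫ p in E, LS (fun p => f p.1) p ∂(m.prod P)
      = ∫ p in S ⁻¹' E, f p.1 ∂(m.prod P) := hLSint E hE
  have h2 : ∫ p in E, LS (fun p => f p.1) p ∂(m.prod P) = 0 := by
    rw [setIntegral_congr_ae hE (heq.mono fun p hp _ => hp)]
    rw [setIntegral_congr_fun (f := fun p : X × (ℕ → Y) => g p.1) (g := fun _ => (0 : ℝ)) hE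
      (fun p hp => le_antisymm hp (hg0 p.1))]
    simp
  have h3 : (fun p : X × (ℕ → Y) => f p.1) =ᵐ[(m.prod P).restrict (S ⁻¹' E)] 0 := by
    refine (integral_eq_zero_iff_of_nonneg (μ := (m.prod P).restrict (S ⁻¹' E))
      (fun p => hf0 p.1) hfi'.integrableOn).mp ?_
    rw [← h1, h2]
  have h5 : ∀ᵐ p ∂(m.prod P), p ∈ S ⁻¹' E → f p.1 = 0 :=
    (ae_restrict_iff' (hSmeas hE)).mp (h3.mono fun p hp => hp)
  rw [ae_iff] at h5
  have h4 : (m.prod P) {p : X × (ℕ → Y) | 0 < f p.1 ∧ g (T (p.2 0) p.1) ≤ 0} = 0 := by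
    refine measure_mono_null ?_ h5
    intro p hp
    have hpE : p ∈ S ⁻¹' E := hp.2
    exact fun h => hp.1.ne' (h hpE)
  -- push forward to X × Y
  set φ : X × (ℕ → Y) → X × Y := fun p => (p.1, p.2 0) with hφdef
  have hφ : Measurable φ :=
    measurable_fst.prodMk ((measurable_pi_apply 0).comp measurable_snd)
  have hη0 : ∀ t : Set Y, MeasurableSet t → P ((fun ω : ℕ → Y => ω 0) ⁻¹' t) = η t := by
    intro t ht
    have h := hP 1 (fun _ => t) (fun _ => ht)
    have hset : {ω : ℕ → Y | ∀ i < 1, ω i ∈ (fun _ => t) i}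
        = (fun ω : ℕ → Y => ω 0) ⁻¹' t := by
      ext ω; simp [Nat.lt_one_iff]
    rw [hset] at h
    simpa using h
  have hmap : (m.prod P).map φ = m.prod η := by
    refine (Measure.prod_eq fun s t hs ht => ?_).symm
    rw [Measure.map_apply hφ (hs.prod ht)]
    have hpre : φ ⁻¹' (s ×ˢ t) = s ×ˢ ((fun ω : ℕ → Y => ω 0) ⁻¹' t) := rfl
    rw [hpre, Measure.prod_prod, hη0 t ht]
  set N : Set (X × Y) := {q | 0 < f q.1 ∧ g (T q.2 q.1) ≤ 0} with hNdef
  have hN : MeasurableSet N :=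
    (measurableSet_lt measurable_const (hfm.comp measurable_fst)).inter
      (measurableSet_le (hgm.comp hTmeas) measurable_const)
  have hNnull : (m.prod η) N = 0 := by
    rw [← hmap, Measure.map_apply hφ hN]
    exact h4
  set N' : Set (Y × X) := Prod.swap ⁻¹' N with hN'def
  have hN' : MeasurableSet N' := hN.preimage measurable_swap
  have hN'null : (η.prod m) N' = 0 := by
    rw [← Measure.prod_swap, Measure.map_apply measurable_swap hN']
    have : Prod.swap ⁻¹' N' = N := by
      ext q; simp [hN'def]
    rw [this]; exact hNnull
  have hsec : (fun y => m (Prod.mk y ⁻¹' N')) =ᵐ[η] 0 :=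
    (Measure.measure_prod_null hN').mp hN'null
  rw [Filter.EventuallyEq, ae_iff] at hsec
  simp only [Pi.zero_apply] at hsec
  set Bad : Set Y := {y | ¬ m (Prod.mk y ⁻¹' N') = 0} with hBadDef
  refine ⟨(toMeasurable η Bad)ᶜ, (measurableSet_toMeasurable η Bad).compl, ?_, ?_⟩
  · rw [measure_compl (measurableSet_toMeasurable η Bad) (measure_ne_top _ _)]
    rw [measure_toMeasurable]
    simp [hsec]
  · intro y hy
    have hyB : y ∉ Bad := fun h => hy (subset_toMeasurable η Bad h)
    have hzero : m (Prod.mk y ⁻¹' N') = 0 := by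
      by_contra h
      exact hyB h
    have hset : {x | 0 < f x} \ T y ⁻¹' {x | 0 < g x} = Prod.mk y ⁻¹' N' := by
      ext x
      simp [hNdef, hN'def, Set.mem_diff, not_lt]
    rw [hset]
    exact hzero
end
end
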